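/- arXiv:2308.06356 — 8 statements merged into one kernel-verified Lean document; each statement's English description precedes it below -/
import Mathlib

section
/- If there exist a bounded function u : X → ℝ and a constant c₀ ∈ ℝ with u = T⁻u + c₀, then for every bounded function v : X → ℝ, the sequence (T⁻)ⁿv / n converges uniformly to −c₀ as n → ∞; in fact ‖(T⁻)ⁿv + n·c₀‖_∞ ≤ ‖u − v‖_∞ + ‖u‖_∞ for all n. -/
/-- The (negative) Lax–Oleinik operator. -/
noncomputable def Tminus {X : Type*} (c : X × X → ℝ) (f : X → ℝ) : X → ℝ :=
  fun x => ⨅ y, (f y + c (y, x))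

theorem stmt2 {X : Type*} [MetricSpace X] [CompactSpace X] [Nonempty X]
    (c : X × X → ℝ) (hc : Continuous c) (c₀ : ℝ)
    (u : X → ℝ) (hu_bdd : ∃ M, ∀ x, |u x| ≤ M)
    (hu : ∀ x, u x = Tminus c u x + c₀)
    (v : X → ℝ) (hv_bdd : ∃ M, ∀ x, |v x| ≤ M) :
    (∀ n : ℕ, ∀ x : X,
        |(Tminus c)^[n] v x + n * c₀| ≤ (⨆ x, |u x - v x|) + ⨆ x, |u x|) ∧
    TendstoUniformly (fun (n : ℕ) (x : X) => (Tminus c)^[n] v x / n)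
      (fun _ => -c₀) Filter.atTop := by
  obtain ⟨Mu, hMu⟩ := hu_bdd
  obtain ⟨Mv, hMv⟩ := hv_bdd
  have hMu0 : 0 ≤ Mu := le_trans (abs_nonneg _) (hMu Classical.ofNonempty)
  obtain ⟨p0, -, hB0⟩ := isCompact_univ.exists_isMaxOn Set.univ_nonempty
    (continuous_abs.comp hc).continuousOn
  set B := |c p0| with hBdef
  have hB : ∀ p : X × X, |c p| ≤ B := fun p => hB0 (Set.mem_univ p)
  -- bddBelow helper
  have hbdd : ∀ (f : X → ℝ) (Mf : ℝ), (∀ y, |f y| ≤ Mf) → ∀ x : X,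
      BddBelow (Set.range fun y => f y + c (y, x)) := by
    intro f Mf hf x
    refine ⟨-Mf - B, ?_⟩
    rintro _ ⟨y, rfl⟩
    show -Mf - B ≤ f y + c (y, x)
    have h1 := abs_le.1 (hf y)
    have h2 := abs_le.1 (hB (y, x))
    linarith [h1.1, h2.1]
  -- contraction
  have hcontr : ∀ (f g : X → ℝ) (Mf Mg S : ℝ), (∀ y, |f y| ≤ Mf) → (∀ y, |g y| ≤ Mg) →
      (∀ y, |f y - g y| ≤ S) → ∀ x, |Tminus c f x - Tminus c g x| ≤ S := by
    intro f g Mf Mg S hf hg hfg x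
    have hbf := hbdd f Mf hf x
    have hbg := hbdd g Mg hg x
    have h1 : Tminus c g x - S ≤ Tminus c f x := by
      apply le_ciInf
      intro y
      have h2 : Tminus c g x ≤ g y + c (y, x) := ciInf_le hbg y
      have h3 := abs_le.1 (hfg y)
      linarith [h3.1]
    have h2 : Tminus c f x - S ≤ Tminus c g x := by
      apply le_ciInf
      intro y
      have h2 : Tminus c f x ≤ f y + c (y, x) := ciInf_le hbf y
      have h3 := abs_le.1 (hfg y)
      linarith [h3.2]
    rw [abs_le]; constructor <;> linarith
  -- shift
  have hshift : ∀ (f : X → ℝ) (Mf K : ℝ), (∀ y, |f y| ≤ Mf) →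
      ∀ x, Tminus c (fun y => f y - K) x = Tminus c f x - K := by
    intro f Mf K hf x
    have hf' : ∀ y, |f y - K| ≤ Mf + |K| := by
      intro y
      have h := abs_sub (f y) K
      have := hf y
      linarith
    have hb1 := hbdd (fun y => f y - K) (Mf + |K|) hf' x
    have hb2 := hbdd f Mf hf x
    apply le_antisymm
    · have : Tminus c (fun y => f y - K) x + K ≤ Tminus c f x := by
        apply le_ciInf
        intro y
        have h : Tminus c (fun y => f y - K) x ≤ f y - K + c (y, x) := ciInf_le hb1 y
        linarith
      linarith
    · have : Tminus c f x - K ≤ Tminus c (fun y => f y - K) x := by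
        apply le_ciInf
        intro y
        have h : Tminus c f x ≤ f y + c (y, x) := ciInf_le hb2 y
        show Tminus c f x - K ≤ f y - K + c (y, x)
        linarith
      linarith
  -- iterates on u
  have hTu : ∀ (n : ℕ) (x : X), (Tminus c)^[n] u x = u x - n * c₀ := by
    intro n
    induction n with
    | zero => intro x; simp
    | succ n ih =>
      intro x
      have hfun : (Tminus c)^[n] u = fun y => u y - n * c₀ := funext ih
      rw [Function.iterate_succ_apply', hfun, hshift u Mu (n * c₀) hMu x]
      have := hu x
      push_cast
      linarith
  -- bound on iterates of u
  have hTu_bdd : ∀ (n : ℕ) (y : X), |(Tminus c)^[n] u y| ≤ Mu + n * |c₀| := by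
    intro n y
    rw [hTu]
    have h1 := abs_sub (u y) ((n : ℝ) * c₀)
    have h2 : |(n : ℝ) * c₀| = n * |c₀| := by
      rw [abs_mul, Nat.abs_cast]
    have := hMu y
    rw [h2] at h1
    linarith
  set S := ⨆ x, |u x - v x| with hSdef
  have hSbdd : BddAbove (Set.range fun x => |u x - v x|) := by
    refine ⟨Mu + Mv, ?_⟩
    rintro _ ⟨x, rfl⟩
    have := abs_sub (u x) (v x)
    have := hMu x
    have := hMv x
    linarith
  have hS : ∀ x, |u x - v x| ≤ S := fun x => le_ciSup hSbdd x
  have hS0 : 0 ≤ S := le_trans (abs_nonneg _) (hS Classical.ofNonempty)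
  -- difference bound by induction
  have hdiff : ∀ (n : ℕ) (x : X), |(Tminus c)^[n] v x - (Tminus c)^[n] u x| ≤ S := by
    intro n
    induction n with
    | zero => intro x; simpa [abs_sub_comm] using hS x
    | succ n ih =>
      intro x
      have hvb : ∀ y, |(Tminus c)^[n] v y| ≤ Mu + n * |c₀| + S := by
        intro y
        have h1 := ih y
        have h2 := hTu_bdd n y
        have h3 := abs_sub_abs_le_abs_sub ((Tminus c)^[n] v y) ((Tminus c)^[n] u y)
        linarith
      rw [Function.iterate_succ_apply', Function.iterate_succ_apply']
      exact hcontr _ _ _ _ S hvb (hTu_bdd n) ih x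
  have hsupu : BddAbove (Set.range fun x => |u x|) := ⟨Mu, by rintro _ ⟨x, rfl⟩; exact hMu x⟩
  have hu_sup : ∀ x, |u x| ≤ ⨆ x, |u x| := fun x => le_ciSup hsupu x
  have key : ∀ (n : ℕ) (x : X), |(Tminus c)^[n] v x + n * c₀| ≤ S + ⨆ x, |u x| := by
    intro n x
    have h1 := hdiff n x
    have h2 := hTu n x
    have h3 : (Tminus c)^[n] v x + n * c₀ =
        ((Tminus c)^[n] v x - (Tminus c)^[n] u x) + u x := by rw [h2]; ring
    rw [h3]
    calc |((Tminus c)^[n] v x - (Tminus c)^[n] u x) + u x|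
        ≤ |(Tminus c)^[n] v x - (Tminus c)^[n] u x| + |u x| := abs_add_le _ _
      _ ≤ S + ⨆ x, |u x| := add_le_add h1 (hu_sup x)
  refine ⟨key, ?_⟩
  set C := S + ⨆ x, |u x| with hCdef
  have hC0 : 0 ≤ C := by
    have := hu_sup Classical.ofNonempty
    have := abs_nonneg (u Classical.ofNonempty)
    simp only [hCdef]
    linarith
  rw [Metric.tendstoUniformly_iff]
  intro ε hε
  obtain ⟨N, hN⟩ := exists_nat_gt (C / ε)
  filter_upwards [Filter.eventually_ge_atTop (N + 1)] with n hn x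
  have hn0 : (0:ℝ) < n := by
    have : 1 ≤ n := le_trans (Nat.le_add_left 1 N) hn
    exact_mod_cast Nat.lt_of_lt_of_le Nat.zero_lt_one this
  have hCn : C < ε * n := by
    have hNn : (C / ε) < n := by
      have : (N : ℝ) < n := by exact_mod_cast Nat.lt_of_lt_of_le (Nat.lt_succ_self N) hn
      linarith
    calc C = (C / ε) * ε := by field_simp
      _ < n * ε := by apply mul_lt_mul_of_pos_right hNn hε
      _ = ε * n := mul_comm _ _
  rw [Real.dist_eq]
  have heq : -c₀ - (Tminus c)^[n] v x / n = -(((Tminus c)^[n] v x + n * c₀) / n) := by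
    field_simp
    ring
  rw [heq, abs_neg, abs_div, abs_of_pos hn0, div_lt_iff₀ hn0]
  calc |(Tminus c)^[n] v x + n * c₀| ≤ C := key n x
    _ < ε * n := hCn
end

section
/- The critical constant is unique: if u₁ = T⁻u₁ + c₁ and u₂ = T⁻u₂ + c₂ for bounded functions u₁, u₂ : X → ℝ and constants c₁, c₂ ∈ ℝ, then c₁ = c₂. -/
theorem stmt3 {X : Type*} [MetricSpace X] [CompactSpace X] [Nonempty X]
    (c : X × X → ℝ) (hc : Continuous c)
    (u₁ u₂ : X → ℝ) (hu₁_bdd : ∃ M, ∀ x, |u₁ x| ≤ M) (hu₂_bdd : ∃ M, ∀ x, |u₂ x| ≤ M)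
    (c₁ c₂ : ℝ)
    (h₁ : ∀ x, u₁ x = Tminus c u₁ x + c₁)
    (h₂ : ∀ x, u₂ x = Tminus c u₂ x + c₂) :
    c₁ = c₂ := by
  obtain ⟨M₁, hM₁⟩ := hu₁_bdd
  obtain ⟨M₂, hM₂⟩ := hu₂_bdd
  -- c is bounded below on the compact space
  obtain ⟨p, -, hp⟩ := isCompact_univ.exists_isMinOn Set.univ_nonempty hc.continuousOn
  set m := c p with hm
  -- monotone comparison lemma for T⁻
  have key : ∀ (f g : X → ℝ) (Bf : ℝ), (∀ y, -Bf ≤ f y) → ∀ K, (∀ y, f y ≤ g y + K) →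
      ∀ x, Tminus c f x ≤ Tminus c g x + K := by
    intro f g Bf hBf K hK x
    have hbdd : BddBelow (Set.range fun y => f y + c (y, x)) := by
      refine ⟨-Bf + m, ?_⟩
      rintro _ ⟨y, rfl⟩
      exact add_le_add (hBf y) (hp (Set.mem_univ (y, x)))
    have : ∀ y, Tminus c f x - K ≤ g y + c (y, x) := by
      intro y
      have h1 : Tminus c f x ≤ f y + c (y, x) := ciInf_le hbdd y
      have h2 := hK y
      simp only [Tminus] at h1 ⊢
      linarith
    have h2 := le_ciInf this
    simp only [Tminus] at h2 ⊢
    linarith [h2]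
  -- T⁻ commutes with adding constants
  have hconst : ∀ (f : X → ℝ) (Bf : ℝ), (∀ y, -Bf ≤ f y) → ∀ (a : ℝ) (x : X),
      Tminus c (fun y => f y + a) x = Tminus c f x + a := by
    intro f Bf hBf a x
    have hbdd : BddBelow (Set.range fun y => f y + c (y, x)) := by
      refine ⟨-Bf + m, ?_⟩
      rintro _ ⟨y, rfl⟩
      exact add_le_add (hBf y) (hp (Set.mem_univ (y, x)))
    simp only [Tminus]
    rw [ciInf_add hbdd a]
    congr 1
    funext y
    ring
  -- the key inductive bound
  set K := M₁ + M₂ with hK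
  have habs : ∀ y, |u₁ y - u₂ y| ≤ K := by
    intro y
    have := abs_sub (u₁ y) (u₂ y)
    calc |u₁ y - u₂ y| ≤ |u₁ y| + |u₂ y| := abs_sub _ _
      _ ≤ M₁ + M₂ := add_le_add (hM₁ y) (hM₂ y)
  have main : ∀ n : ℕ, ∀ x, |(u₁ x - n * c₁) - (u₂ x - n * c₂)| ≤ K := by
    intro n
    induction n with
    | zero => intro x; simpa using habs x
    | succ n ih =>
      -- fₙ = u₁ - n c₁, gₙ = u₂ - n c₂; T fₙ = fₙ₊₁, T gₙ = gₙ₊₁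
      set f : X → ℝ := fun y => u₁ y - n * c₁ with hf
      set g : X → ℝ := fun y => u₂ y - n * c₂ with hg
      have hBf : ∀ y, -(M₁ + n * |c₁|) ≤ f y := by
        intro y
        have := abs_le.1 (hM₁ y)
        have := neg_abs_le (n * c₁)
        have : -(n * |c₁|) ≤ -(n * c₁) :=
          neg_le_neg (mul_le_mul_of_nonneg_left (le_abs_self c₁) (Nat.cast_nonneg n))
        simp only [hf]
        have h1 := (abs_le.1 (hM₁ y)).1
        linarith
      have hBg : ∀ y, -(M₂ + n * |c₂|) ≤ g y := by
        intro y
        have : -(n * |c₂|) ≤ -(n * c₂) :=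
          neg_le_neg (mul_le_mul_of_nonneg_left (le_abs_self c₂) (Nat.cast_nonneg n))
        simp only [hg]
        have h1 := (abs_le.1 (hM₂ y)).1
        linarith
      have hTf : ∀ x, Tminus c f x = u₁ x - (n + 1 : ℕ) * c₁ := by
        intro x
        have hBu : ∀ y, -M₁ ≤ u₁ y := fun y => (abs_le.1 (hM₁ y)).1
        have : Tminus c (fun y => u₁ y + (-(n * c₁))) x = Tminus c u₁ x + (-(n * c₁)) :=
          hconst u₁ M₁ hBu _ x
        have hfe : f = fun y => u₁ y + (-(n * c₁)) := by funext y; simp [hf]; ring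
        rw [hfe, this]
        have := h₁ x
        push_cast
        linarith
      have hTg : ∀ x, Tminus c g x = u₂ x - (n + 1 : ℕ) * c₂ := by
        intro x
        have hBu : ∀ y, -M₂ ≤ u₂ y := fun y => (abs_le.1 (hM₂ y)).1
        have : Tminus c (fun y => u₂ y + (-(n * c₂))) x = Tminus c u₂ x + (-(n * c₂)) :=
          hconst u₂ M₂ hBu _ x
        have hge : g = fun y => u₂ y + (-(n * c₂)) := by funext y; simp [hg]; ring
        rw [hge, this]
        have := h₂ x
        push_cast
        linarith
      intro x
      have h1 : Tminus c f x ≤ Tminus c g x + K :=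
        key f g (M₁ + n * |c₁|) hBf K (fun y => by
          have := (abs_le.1 (ih y)).2; simp only [hf, hg]; linarith) x
      have h2 : Tminus c g x ≤ Tminus c f x + K :=
        key g f (M₂ + n * |c₂|) hBg K (fun y => by
          have := (abs_le.1 (ih y)).1; simp only [hf, hg]; linarith) x
      rw [hTf x] at h1 h2
      rw [hTg x] at h1 h2
      rw [abs_le]
      constructor <;> linarith
  -- conclude
  by_contra hne
  have hpos : 0 < |c₂ - c₁| := abs_pos.2 (sub_ne_zero.2 (Ne.symm hne))
  obtain ⟨x₀⟩ := ‹Nonempty X›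
  have hbound : ∀ n : ℕ, (n : ℝ) * |c₂ - c₁| ≤ K + K := by
    intro n
    have := main n x₀
    have h0 := habs x₀
    have heq : (u₁ x₀ - n * c₁) - (u₂ x₀ - n * c₂) = (u₁ x₀ - u₂ x₀) + n * (c₂ - c₁) := by ring
    rw [heq] at this
    have h1 : |(n : ℝ) * (c₂ - c₁)| ≤ |(u₁ x₀ - u₂ x₀) + n * (c₂ - c₁)| + |u₁ x₀ - u₂ x₀| := by
      have h := abs_add_le ((u₁ x₀ - u₂ x₀) + (n : ℝ) * (c₂ - c₁)) (-(u₁ x₀ - u₂ x₀))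
      rw [abs_neg] at h
      have he : (u₁ x₀ - u₂ x₀) + (n : ℝ) * (c₂ - c₁) + -(u₁ x₀ - u₂ x₀) = (n : ℝ) * (c₂ - c₁) := by
        ring
      rw [he] at h
      exact h
    rw [abs_mul, Nat.abs_cast] at h1
    linarith
  obtain ⟨n, hn⟩ := exists_nat_gt ((K + K) / |c₂ - c₁|)
  have := hbound n
  have : (n : ℝ) ≤ (K + K) / |c₂ - c₁| := (le_div_iff₀ hpos).2 this
  linarith
end

section
/- Characterization of the critical constant by subsolutions: if u = T⁻u + c₀ for some bounded u and constant c₀, then c₀ = min { C ∈ ℝ : there exists a C-subsolution }; in particular, if for some C a C-subsolution exists, then C ≥ c₀. -/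
theorem stmt8 {X : Type*} [MetricSpace X] [CompactSpace X] [Nonempty X]
    (c : X × X → ℝ) (hc : Continuous c) (c₀ : ℝ)
    (u : X → ℝ) (hu_bdd : ∃ M, ∀ x, |u x| ≤ M)
    (hu : ∀ x, u x = Tminus c u x + c₀) :
    IsLeast {C : ℝ | ∃ v : X → ℝ, ∀ x y : X, v y - v x ≤ c (x, y) + C} c₀ := by
  obtain ⟨M, hM⟩ := hu_bdd
  -- c is bounded
  obtain ⟨K, hK⟩ : ∃ K, ∀ p : X × X, |c p| ≤ K := by
    obtain ⟨K, hK⟩ := (isCompact_univ.image hc).isBounded.subset_ball 0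
    exact ⟨K, fun p => by
      have := hK ⟨p, Set.mem_univ p, rfl⟩
      rw [Metric.mem_ball, Real.dist_eq, sub_zero] at this
      exact this.le⟩
  constructor
  · -- u is a c₀-subsolution
    refine ⟨u, fun x y => ?_⟩
    have hbdd : BddBelow (Set.range fun z => u z + c (z, y)) := by
      refine ⟨-M - K, ?_⟩
      rintro _ ⟨z, rfl⟩
      have h1 := (abs_le.1 (hM z)).1
      have h2 := (abs_le.1 (hK (z, y))).1
      show -M - K ≤ u z + c (z, y)
      linarith
    have : Tminus c u y ≤ u x + c (x, y) := ciInf_le hbdd x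
    have huy := hu y
    linarith
  · rintro C ⟨v, hv⟩
    -- v is bounded above
    obtain ⟨x₀⟩ := (inferInstance : Nonempty X)
    set w : X → ℝ := fun z => u z - v z with hw
    have hvub : ∀ z, v z ≤ v x₀ + K + C := fun z => by
      have := hv x₀ z
      have := (abs_le.1 (hK (x₀, z))).2
      linarith
    have hwbdd : BddBelow (Set.range w) := by
      refine ⟨-M - (v x₀ + K + C), ?_⟩
      rintro _ ⟨z, rfl⟩
      have h1 := (abs_le.1 (hM z)).1
      have h2 := hvub z
      show -M - (v x₀ + K + C) ≤ u z - v z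
      linarith
    set m : ℝ := ⨅ z, w z with hm
    have hmle : ∀ z, m ≤ w z := fun z => ciInf_le hwbdd z
    -- key pointwise bound: w y ≥ m + c₀ - C
    have key : ∀ y, m + c₀ - C ≤ w y := by
      intro y
      -- Tminus c u y ≥ Tminus c v y + m
      have hbddv : BddBelow (Set.range fun z => v z + c (z, y)) := by
        refine ⟨v y - C, ?_⟩
        rintro _ ⟨z, rfl⟩
        have := hv z y
        show v y - C ≤ v z + c (z, y)
        linarith
      have h1 : (⨅ z, v z + c (z, y)) + m ≤ Tminus c u y := by
        rw [Tminus]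
        refine le_ciInf fun z => ?_
        have h2 : (⨅ z, v z + c (z, y)) ≤ v z + c (z, y) := ciInf_le hbddv z
        have h3 := hmle z
        simp only [hw] at h3
        linarith
      have h4 : v y - C ≤ ⨅ z, v z + c (z, y) := by
        refine le_ciInf fun z => ?_
        have := hv z y
        linarith
      have huy := hu y
      simp only [hw]
      linarith
    have : m + c₀ - C ≤ m := le_ciInf key
    linarith
end

section
/- Pointwise infimum of weak KAM solutions is a weak KAM solution: if (u_α)_{α ∈ A} is a family of functions each satisfying u_α = T⁻u_α + c₀, and the pointwise infimum u := inf_α u_α is real-valued, then u = T⁻u + c₀; similarly, a pointwise infimum (resp. supremum) of c₀-subsolutions, when well-defined, is a c₀-subsolution. -/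
theorem stmt11 {X : Type*} [MetricSpace X] [CompactSpace X] [Nonempty X]
    (c : X × X → ℝ) (hc : Continuous c) (c₀ : ℝ)
    (A : Type*) [Nonempty A] :
    (∀ u : A → X → ℝ,
        (∀ α, ∀ x, u α x = Tminus c (u α) x + c₀) →
        (∀ x, BddBelow (Set.range fun α => u α x)) →
        ∀ x, (⨅ α, u α x) = Tminus c (fun x' => ⨅ α, u α x') x + c₀) ∧
    (∀ u : A → X → ℝ,
        (∀ α, ∀ x y : X, u α y - u α x ≤ c (x, y) + c₀) →
        (∀ x, BddBelow (Set.range fun α => u α x)) →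
        ∀ x y : X, (⨅ α, u α y) - (⨅ α, u α x) ≤ c (x, y) + c₀) ∧
    (∀ u : A → X → ℝ,
        (∀ α, ∀ x y : X, u α y - u α x ≤ c (x, y) + c₀) →
        (∀ x, BddAbove (Set.range fun α => u α x)) →
        ∀ x y : X, (⨆ α, u α y) - (⨆ α, u α x) ≤ c (x, y) + c₀) := by
  obtain ⟨M, hM⟩ := (isCompact_range hc).bddAbove
  obtain ⟨m, hm⟩ := (isCompact_range hc).bddBelow
  have hM' : ∀ p, c p ≤ M := fun p => hM ⟨p, rfl⟩
  have hm' : ∀ p, m ≤ c p := fun p => hm ⟨p, rfl⟩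
  refine ⟨?_, ?_, ?_⟩
  · intro u h1 hbA x
    -- each family y ↦ u α y + c (y, x) is bounded below
    have key : ∀ α x, BddBelow (Set.range fun y => u α y + c (y, x)) := by
      intro α x
      by_contra hnb
      have h0 : ∀ x', ¬ BddBelow (Set.range fun y => u α y + c (y, x')) := by
        rintro x' ⟨b, hb⟩
        apply hnb
        refine ⟨b - M + m, ?_⟩
        rintro _ ⟨y, rfl⟩
        have h4 : b ≤ u α y + c (y, x') := hb ⟨y, rfl⟩
        have h2 := hM' (y, x')
        have h3 := hm' (y, x)
        dsimp
        linarith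
      have hc0 : ∀ x', u α x' = c₀ := by
        intro x'
        have h5 := h1 α x'
        rw [show Tminus c (u α) x' = ⨅ y, (u α y + c (y, x')) from rfl,
          Real.iInf_of_not_bddBelow (h0 x')] at h5
        simpa using h5
      apply hnb
      refine ⟨c₀ + m, ?_⟩
      rintro _ ⟨y, rfl⟩
      have := hm' (y, x)
      dsimp
      rw [hc0 y]
      linarith
    have hlow : ∀ α x y, u α x - c₀ ≤ u α y + c (y, x) := by
      intro α x y
      have h := ciInf_le (key α x) y
      have h2 := h1 α x
      rw [show Tminus c (u α) x = ⨅ y, (u α y + c (y, x)) from rfl] at h2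
      linarith
    have hvle : ∀ (α : A) x', (⨅ β, u β x') ≤ u α x' := fun α x' => ciInf_le (hbA x') α
    have hvb : ∀ x' y, (⨅ α, u α x') - c₀ ≤ (⨅ α, u α y) + c (y, x') := by
      intro x' y
      have h6 : ∀ α, (⨅ β, u β x') - c₀ - c (y, x') ≤ u α y := by
        intro α
        have h := hlow α x' y
        have h' := hvle α x'
        linarith
      have := le_ciInf h6
      linarith
    rw [show Tminus c (fun x' => ⨅ α, u α x') x = ⨅ y, ((⨅ α, u α y) + c (y, x)) from rfl]
    have hbv : BddBelow (Set.range fun y => (⨅ α, u α y) + c (y, x)) :=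
      ⟨(⨅ α, u α x) - c₀, by rintro _ ⟨y, rfl⟩; exact hvb x y⟩
    apply le_antisymm
    · have := le_ciInf (fun y => hvb x y)
      linarith
    · refine le_ciInf fun α => ?_
      have hmono : (⨅ y, ((⨅ α, u α y) + c (y, x))) ≤ ⨅ y, (u α y + c (y, x)) :=
        ciInf_mono hbv (fun y => by have := hvle α y; linarith)
      have h7 := h1 α x
      rw [show Tminus c (u α) x = ⨅ y, (u α y + c (y, x)) from rfl] at h7
      linarith
  · intro u h hb x y
    have h6 : ∀ α, (⨅ β, u β y) - c (x, y) - c₀ ≤ u α x := by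
      intro α
      have h1 := h α x y
      have h2 : (⨅ β, u β y) ≤ u α y := ciInf_le (hb y) α
      linarith
    have := le_ciInf h6
    linarith
  · intro u h hb x y
    have h6 : ∀ α, u α y ≤ (⨆ β, u β x) + c (x, y) + c₀ := by
      intro α
      have h1 := h α x y
      have h2 : u α x ≤ ⨆ β, u β x := le_ciSup (hb x) α
      linarith
    have := ciSup_le h6
    linarith
end

section
/- Uniqueness on the Aubry set: if u and v are respectively a weak KAM solution (u = T⁻u + c₀, continuous) and a c₀-subsolution with u ≥ v on the projected Aubry set 𝒜, then u ≥ v on all of X. Consequently, two weak KAM solutions that coincide on 𝒜 coincide everywhere. -/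
/-- The minimal cost `c_n(x,y)` over chains of length `n` from `x` to `y`. -/
noncomputable def chainCost {X : Type*} (c : X × X → ℝ) (n : ℕ) (x y : X) : ℝ :=
  ⨅ p : {q : ℕ → X // q 0 = x ∧ q n = y},
    ∑ i ∈ Finset.range n, c (p.1 i, p.1 (i + 1))

/-- The Peierls barrier. -/
noncomputable def peierls {X : Type*} (c : X × X → ℝ) (c₀ : ℝ) (x y : X) : ℝ :=
  Filter.liminf (fun n : ℕ => chainCost c n x y + n * c₀) Filter.atTop

/-- The projected Aubry set. -/
def aubry {X : Type*} (c : X × X → ℝ) (c₀ : ℝ) : Set X :=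
  {x | peierls c c₀ x x = 0}

open Filter Finset
set_option linter.unusedSectionVars false

section Aux
variable {X : Type*} [MetricSpace X] [CompactSpace X] [Nonempty X]
  {c : X × X → ℝ} {c₀ : ℝ}

lemma cost_lb (hc : Continuous c) : ∃ m : ℝ, ∀ p, m ≤ c p := by
  obtain ⟨p, -, hp⟩ := isCompact_univ.exists_isMinOn Set.univ_nonempty hc.continuousOn
  exact ⟨c p, fun q => hp (Set.mem_univ q)⟩

lemma chainCost_le (hc : Continuous c) (n : ℕ) (x y : X) (q : ℕ → X)
    (h0 : q 0 = x) (hn : q n = y) :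
    chainCost c n x y ≤ ∑ i ∈ Finset.range n, c (q i, q (i + 1)) := by
  unfold chainCost
  obtain ⟨m, hm⟩ := cost_lb hc
  have hbdd : BddBelow (Set.range (fun p : {q : ℕ → X // q 0 = x ∧ q n = y} =>
      ∑ i ∈ Finset.range n, c (p.1 i, p.1 (i + 1)))) := by
    refine ⟨n • m, ?_⟩
    rintro r ⟨p, rfl⟩
    calc (n : ℕ) • m = (Finset.range n).card • m := by rw [Finset.card_range]
      _ ≤ _ := Finset.card_nsmul_le_sum _ _ _ (fun i _ => hm _)
  exact ciInf_le hbdd ⟨q, h0, hn⟩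

-- telescoping along a chain for a subsolution
lemma sub_chain {v : X → ℝ} (hv : ∀ x y : X, v y - v x ≤ c (x, y) + c₀)
    (q : ℕ → X) (n : ℕ) :
    v (q n) - v (q 0) ≤ (∑ i ∈ Finset.range n, c (q i, q (i + 1))) + n * c₀ := by
  have h1 : ∑ i ∈ Finset.range n, (v (q (i + 1)) - v (q i)) = v (q n) - v (q 0) :=
    Finset.sum_range_sub (fun i => v (q i)) n
  have h2 : ∑ i ∈ Finset.range n, (v (q (i + 1)) - v (q i))
      ≤ ∑ i ∈ Finset.range n, (c (q i, q (i + 1)) + c₀) :=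
    Finset.sum_le_sum fun i _ => hv _ _
  rw [h1, Finset.sum_add_distrib, Finset.sum_const, Finset.card_range,
    nsmul_eq_mul] at h2
  exact h2

lemma chainCost_ge {v : X → ℝ} (hv : ∀ x y : X, v y - v x ≤ c (x, y) + c₀)
    (n : ℕ) (z : X) : v z - v z - n * c₀ ≤ chainCost c n z z := by
  have : Nonempty {q : ℕ → X // q 0 = z ∧ q n = z} := ⟨⟨fun _ => z, rfl, rfl⟩⟩
  refine le_ciInf fun p => ?_
  have := sub_chain hv p.1 n
  rw [p.2.1, p.2.2] at this
  linarith

end Aux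

section Aux2
variable {X : Type*} [MetricSpace X] [CompactSpace X] [Nonempty X]
  {c : X × X → ℝ} {c₀ : ℝ} {u : X → ℝ}
set_option linter.unusedSectionVars false

lemma bdd_T (hc : Continuous c) (hu : Continuous u) (x : X) :
    BddBelow (Set.range fun y => u y + c (y, x)) := by
  obtain ⟨m, hm⟩ := cost_lb hc
  obtain ⟨w, -, hw⟩ := isCompact_univ.exists_isMinOn Set.univ_nonempty hu.continuousOn
  refine ⟨u w + m, ?_⟩
  rintro r ⟨y, rfl⟩
  exact add_le_add (hw (Set.mem_univ y)) (hm _)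

lemma wk_sub (hc : Continuous c) (hu : Continuous u)
    (hwk : ∀ x, u x = Tminus c u x + c₀) :
    ∀ x y : X, u y - u x ≤ c (x, y) + c₀ := by
  intro x y
  have h : Tminus c u y ≤ u x + c (x, y) := by
    unfold Tminus
    exact ciInf_le (bdd_T hc hu y) x
  have := hwk y
  linarith

lemma calib (hc : Continuous c) (hu : Continuous u)
    (hwk : ∀ x, u x = Tminus c u x + c₀) :
    ∀ w : X, ∃ y, u w = u y + c (y, w) + c₀ := by
  intro w
  have hg : Continuous fun y => u y + c (y, w) :=
    hu.add (hc.comp (continuous_id.prodMk continuous_const))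
  obtain ⟨y, -, hy⟩ := isCompact_univ.exists_isMinOn Set.univ_nonempty hg.continuousOn
  refine ⟨y, ?_⟩
  have h1 : Tminus c u w = u y + c (y, w) := by
    unfold Tminus
    exact le_antisymm (ciInf_le (bdd_T hc hu w) y) (le_ciInf fun y' => hy (Set.mem_univ y'))
  rw [hwk w, h1]

lemma tel (a : ℕ → X)
    (hstep : ∀ n, u (a n) = u (a (n + 1)) + c (a (n + 1), a n) + c₀) :
    ∀ m N : ℕ, m ≤ N →
      ∑ i ∈ Finset.range m, c (a (N - i), a (N - (i + 1)))
        = u (a (N - m)) - u (a N) - m * c₀ := by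
  intro m
  induction m with
  | zero => intro N _; simp
  | succ m ih =>
    intro N h
    rw [Finset.sum_range_succ, ih N (by omega)]
    have e1 : N - m = (N - (m + 1)) + 1 := by omega
    have h2 := hstep (N - (m + 1))
    rw [← e1] at h2
    push_cast
    linarith

lemma E1 (a : ℕ → X)
    (hstep : ∀ n, u (a n) = u (a (n + 1)) + c (a (n + 1), a n) + c₀)
    (z : X) (K N : ℕ) (hKN : K < N) (q : ℕ → X)
    (hq0 : q 0 = z) (hq : ∀ i, i ≠ 0 → q i = a (N - i)) :
    ∑ i ∈ Finset.range (N - K), c (q i, q (i + 1))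
      = u (a K) - u (a N) - (N - K : ℕ) * c₀ + (c (z, a (N - 1)) - c (a N, a (N - 1))) := by
  obtain ⟨m', hm'⟩ : ∃ m', N - K = m' + 1 := ⟨N - K - 1, by omega⟩
  rw [hm', Finset.sum_range_succ']
  have hmid : ∑ i ∈ Finset.range m', c (q (i + 1), q (i + 1 + 1))
      = ∑ i ∈ Finset.range m', c (a ((N - 1) - i), a ((N - 1) - (i + 1))) := by
    refine Finset.sum_congr rfl fun i hi => ?_
    rw [hq (i + 1) (by omega), hq (i + 1 + 1) (by omega),
      show N - (i + 1) = (N - 1) - i by omega,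
      show N - (i + 1 + 1) = (N - 1) - (i + 1) by omega]
  have htel := tel a hstep m' (N - 1) (by omega)
  have e2 : (N - 1) - m' = K := by omega
  rw [e2] at htel
  rw [hmid, htel, hq0, hq 1 (by omega)]
  have e3 : N - 1 + 1 = N := by omega
  have h2 := hstep (N - 1)
  rw [e3] at h2
  push_cast
  linarith

lemma E2 (a : ℕ → X)
    (hstep : ∀ n, u (a n) = u (a (n + 1)) + c (a (n + 1), a n) + c₀)
    (z : X) (K N : ℕ) (hKN : K + 2 ≤ N) (q : ℕ → X)
    (hq0 : q 0 = z) (hqm : q (N - K) = z)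
    (hq : ∀ i, i ≠ 0 → i ≠ N - K → q i = a (N - i)) :
    ∑ i ∈ Finset.range (N - K), c (q i, q (i + 1)) + (N - K : ℕ) * c₀
      = (u (a K) - u (a N)) + (c (z, a (N - 1)) - c (a N, a (N - 1)))
        + (c (a (K + 1), z) - c (a (K + 1), a K)) := by
  obtain ⟨m, hm⟩ : ∃ m, N - K = m + 2 := ⟨N - K - 2, by omega⟩
  rw [hm, Finset.sum_range_succ, Finset.sum_range_succ']
  have hlast : c (q (m + 1), q (m + 1 + 1)) = c (a (K + 1), z) := by
    rw [show m + 1 + 1 = N - K from hm.symm, hqm, hq (m + 1) (by omega) (by omega),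
      show N - (m + 1) = K + 1 by omega]
  have hfirst : c (q 0, q 1) = c (z, a (N - 1)) := by
    rw [hq0, hq 1 (by omega) (by omega)]
  have hmid : ∑ i ∈ Finset.range m, c (q (i + 1), q (i + 1 + 1))
      = ∑ i ∈ Finset.range m, c (a ((N - 1) - i), a ((N - 1) - (i + 1))) := by
    refine Finset.sum_congr rfl fun i hi => ?_
    have hi' : i < m := Finset.mem_range.mp hi
    rw [hq (i + 1) (by omega) (by omega), hq (i + 1 + 1) (by omega) (by omega),
      show N - (i + 1) = (N - 1) - i by omega,
      show N - (i + 1 + 1) = (N - 1) - (i + 1) by omega]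
  have htel := tel a hstep m (N - 1) (by omega)
  have e2 : (N - 1) - m = K + 1 := by omega
  rw [e2] at htel
  rw [hlast, hfirst, hmid, htel]
  have e3 : N - 1 + 1 = N := by omega
  have h2 := hstep (N - 1)
  rw [e3] at h2
  have h3 := hstep K
  push_cast
  linarith

end Aux2

lemma main_ineq {X : Type*} [MetricSpace X] [CompactSpace X] [Nonempty X]
    (c : X × X → ℝ) (hc : Continuous c) (c₀ : ℝ) (u v : X → ℝ)
    (hu : Continuous u) (hwk : ∀ x, u x = Tminus c u x + c₀)
    (hv : ∀ x y : X, v y - v x ≤ c (x, y) + c₀)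
    (hA : ∀ x ∈ aubry c c₀, v x ≤ u x) (x : X) : v x ≤ u x := by
  classical
  choose s hs using calib hc hu hwk
  set a : ℕ → X := fun n => s^[n] x with ha
  have ha0 : a 0 = x := rfl
  have hstep : ∀ n, u (a n) = u (a (n + 1)) + c (a (n + 1), a n) + c₀ := by
    intro n
    have h : a (n + 1) = s (a n) := Function.iterate_succ_apply' s n x
    rw [h]; exact hs (a n)
  obtain ⟨z, φ, hφ, hlim⟩ := CompactSpace.tendsto_subseq a
  have huc := Metric.uniformContinuous_iff.mp (CompactSpace.uniformContinuous_of_continuous hc)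
  have hcerr : ∀ ε > (0:ℝ), ∃ δ > (0:ℝ),
      (∀ w y : X, dist w z < δ → |c (z, y) - c (w, y)| < ε) ∧
      (∀ w y : X, dist w z < δ → |c (y, z) - c (y, w)| < ε) := by
    intro ε hε
    obtain ⟨δ, hδpos, hδ⟩ := huc ε hε
    refine ⟨δ, hδpos, fun w y hw => ?_, fun w y hw => ?_⟩
    · have hd : dist ((z, y) : X × X) (w, y) < δ := by
        simp only [Prod.dist_eq, dist_self]
        rw [max_eq_left dist_nonneg, dist_comm]
        exact hw
      simpa [Real.dist_eq] using hδ hd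
    · have hd : dist ((y, z) : X × X) (y, w) < δ := by
        simp only [Prod.dist_eq, dist_self]
        rw [max_eq_right dist_nonneg, dist_comm]
        exact hw
      simpa [Real.dist_eq] using hδ hd
  have huz : ∀ ε > (0:ℝ), ∃ δ > (0:ℝ), ∀ w, dist w z < δ → |u w - u z| < ε := by
    intro ε hε
    obtain ⟨δ, hδpos, hδ⟩ := Metric.continuous_iff.mp hu z ε hε
    exact ⟨δ, hδpos, fun w hw => by simpa [Real.dist_eq] using hδ w hw⟩
  have hconv := Metric.tendsto_atTop.mp hlim
  -- z is in the Aubry set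
  have hlow : ∀ n : ℕ, 0 ≤ chainCost c n z z + n * c₀ := by
    intro n
    have := chainCost_ge hv n z
    linarith
  have hAz : z ∈ aubry c c₀ := by
    have hfreq : ∀ ε > (0:ℝ), ∃ᶠ n in atTop, chainCost c n z z + n * c₀ ≤ ε := by
      intro ε hε
      rw [Filter.frequently_atTop]
      intro M
      have hε4 : (0:ℝ) < ε/4 := by linarith
      obtain ⟨δ, hδpos, hδ1, hδ2⟩ := hcerr (ε/4) hε4
      obtain ⟨δ', hδ'pos, hδ'⟩ := huz (ε/4) hε4
      obtain ⟨K₀, hK₀⟩ := hconv (min δ δ') (lt_min hδpos hδ'pos)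
      set l := max (K₀ + 1) (φ K₀ + M + 2) with hl
      have hlK₀ : K₀ ≤ l := by omega
      have hNl : l ≤ φ l := hφ.le_apply
      have hKN : φ K₀ + M + 2 ≤ φ l := le_trans (le_max_right _ _) hNl
      set K := φ K₀ with hK
      set N := φ l with hN
      refine ⟨N - K, by omega, ?_⟩
      set q : ℕ → X := fun i => if i = 0 then z else if i = N - K then z else a (N - i)
        with hqdef
      have h0 : q 0 = z := by simp [hqdef]
      have hqm : q (N - K) = z := by
        simp only [hqdef]
        rw [if_neg (by omega)]
        simp
      have hqi : ∀ i, i ≠ 0 → i ≠ N - K → q i = a (N - i) := by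
        intro i h1 h2
        simp only [hqdef]
        rw [if_neg h1, if_neg h2]
      have hsum := E2 a hstep z K N (by omega) q h0 hqm hqi
      have hcc := chainCost_le hc (N - K) z z q h0 hqm
      have hkclose : dist (a K) z < min δ δ' := hK₀ K₀ le_rfl
      have hlclose : dist (a N) z < min δ δ' := hK₀ l hlK₀
      have e1 : |c (z, a (N - 1)) - c (a N, a (N - 1))| < ε/4 :=
        hδ1 (a N) _ (lt_of_lt_of_le hlclose (min_le_left _ _))
      have e2 : |c (a (K + 1), z) - c (a (K + 1), a K)| < ε/4 :=
        hδ2 (a K) _ (lt_of_lt_of_le hkclose (min_le_left _ _))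
      have e3 : |u (a K) - u z| < ε/4 := hδ' _ (lt_of_lt_of_le hkclose (min_le_right _ _))
      have e4 : |u (a N) - u z| < ε/4 := hδ' _ (lt_of_lt_of_le hlclose (min_le_right _ _))
      obtain ⟨e1a, e1b⟩ := abs_lt.mp e1
      obtain ⟨e2a, e2b⟩ := abs_lt.mp e2
      obtain ⟨e3a, e3b⟩ := abs_lt.mp e3
      obtain ⟨e4a, e4b⟩ := abs_lt.mp e4
      linarith
    have hbdd : IsBoundedUnder (· ≥ ·) atTop (fun n : ℕ => chainCost c n z z + n * c₀) :=
      isBoundedUnder_of ⟨0, hlow⟩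
    have h1 : peierls c c₀ z z ≤ 0 := by
      refine le_of_forall_pos_le_add fun ε hε => ?_
      have := Filter.liminf_le_of_frequently_le (hfreq ε hε) hbdd
      rw [peierls]
      linarith
    have h2 : 0 ≤ peierls c c₀ z z := by
      refine Filter.le_liminf_of_le ?_ (Filter.Eventually.of_forall hlow)
      exact Filter.IsCoboundedUnder.of_frequently_le (hfreq 1 one_pos)
    exact le_antisymm h1 h2
  -- conclusion
  have hvz := hA z hAz
  refine le_of_forall_pos_le_add fun ε hε => ?_
  have hε4 : (0:ℝ) < ε/4 := by linarith
  obtain ⟨δ, hδpos, hδ1, hδ2⟩ := hcerr (ε/4) hε4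
  obtain ⟨δ', hδ'pos, hδ'⟩ := huz (ε/4) hε4
  obtain ⟨K₀, hK₀⟩ := hconv (min δ δ') (lt_min hδpos hδ'pos)
  set K := φ K₀ with hK
  set N := φ (K₀ + 1) with hN
  have hKN : K < N := hφ (by omega)
  set q : ℕ → X := fun i => if i = 0 then z else a (N - i) with hqdef
  have h0 : q 0 = z := by simp [hqdef]
  have hqi : ∀ i, i ≠ 0 → q i = a (N - i) := by
    intro i h1
    simp only [hqdef]
    rw [if_neg h1]
  have hqm : q (N - K) = a K := by
    rw [hqi _ (by omega)]
    congr 1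
    omega
  have hsum := E1 a hstep z K N hKN q h0 hqi
  -- subsolution along q
  have hsub1 := sub_chain hv q (N - K)
  rw [h0, hqm, hsum] at hsub1
  -- subsolution along the calibrated chain from a K to x
  have hsub2 := sub_chain hv (fun i => a (K - i)) K
  have htel2 := tel a hstep K K le_rfl
  simp only [Nat.sub_self, ha0, Nat.sub_zero] at hsub2 htel2
  rw [htel2] at hsub2
  -- error bounds
  have hlclose : dist (a N) z < min δ δ' := hK₀ (K₀ + 1) (by omega)
  have e1 : |c (z, a (N - 1)) - c (a N, a (N - 1))| < ε/4 :=
    hδ1 (a N) _ (lt_of_lt_of_le hlclose (min_le_left _ _))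
  have e4 : |u (a N) - u z| < ε/4 := hδ' _ (lt_of_lt_of_le hlclose (min_le_right _ _))
  obtain ⟨e1a, e1b⟩ := abs_lt.mp e1
  obtain ⟨e4a, e4b⟩ := abs_lt.mp e4
  linarith


theorem stmt15 {X : Type*} [MetricSpace X] [CompactSpace X] [Nonempty X]
    (c : X × X → ℝ) (hc : Continuous c) (c₀ : ℝ) :
    (∀ u v : X → ℝ, Continuous u → (∀ x, u x = Tminus c u x + c₀) →
        (∀ x y : X, v y - v x ≤ c (x, y) + c₀) →
        (∀ x ∈ aubry c c₀, v x ≤ u x) → ∀ x : X, v x ≤ u x) ∧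
    (∀ u v : X → ℝ, Continuous u → Continuous v →
        (∀ x, u x = Tminus c u x + c₀) → (∀ x, v x = Tminus c v x + c₀) →
        (∀ x ∈ aubry c c₀, u x = v x) → u = v) := by
  constructor
  · intro u v hu hwk hv hA x
    exact main_ineq c hc c₀ u v hu hwk hv hA x
  · intro u v hu hv hwku hwkv hA
    funext x
    refine le_antisymm ?_ ?_
    · exact main_ineq c hc c₀ v u hv hwkv (wk_sub hc hu hwku) (fun y hy => (hA y hy).le) x
    · exact main_ineq c hc c₀ u v hu hwku (wk_sub hc hv hwkv) (fun y hy => (hA y hy).ge) x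
end

section
/- Extension from the Aubry set: if f : 𝒜 → ℝ satisfies f(y) − f(x) ≤ h(x,y) for all x, y ∈ 𝒜, then u(x) := inf_{y ∈ 𝒜} (f(y) + h(y,x)) defines a weak KAM solution (u = T⁻u + c₀) with u = f on 𝒜. -/
set_option linter.unusedSectionVars false
set_option linter.deprecated false

namespace Stmt16Aux
open Filter Finset

variable {X : Type*} [MetricSpace X] [CompactSpace X] [Nonempty X]
variable {c : X × X → ℝ} {c₀ : ℝ} {w : X → ℝ} {M K : ℝ}

lemma chain_ne {n : ℕ} (hn : n ≠ 0) (x y : X) :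
    Nonempty {q : ℕ → X // q 0 = x ∧ q n = y} :=
  ⟨⟨fun i => if i = 0 then x else y, by simp, by simp [hn]⟩⟩

lemma w_step (hw : ∀ x, |w x| ≤ M) (hK : ∀ p, |c p| ≤ K)
    (hWK : ∀ x, w x = Tminus c w x + c₀) (z x : X) :
    w x ≤ w z + c (z, x) + c₀ := by
  have hb : BddBelow (Set.range fun z => w z + c (z, x)) := by
    refine ⟨-(M + K), ?_⟩
    rintro r ⟨z, rfl⟩
    have h1 := (abs_le.1 (hw z)).1
    have h2 := (abs_le.1 (hK (z, x))).1
    dsimp only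
    linarith
  have h : Tminus c w x ≤ w z + c (z, x) := ciInf_le hb z
  have h2 := hWK x
  linarith

lemma w_chain (hw : ∀ x, |w x| ≤ M) (hK : ∀ p, |c p| ≤ K)
    (hWK : ∀ x, w x = Tminus c w x + c₀) (q : ℕ → X) (n : ℕ) :
    w (q n) ≤ w (q 0) + (∑ i ∈ Finset.range n, c (q i, q (i + 1))) + n * c₀ := by
  induction n with
  | zero => simp
  | succ n ih =>
    have h := w_step hw hK hWK (q n) (q (n + 1))
    rw [Finset.sum_range_succ]
    push_cast
    push_cast at ih
    linarith

lemma sum_bddBelow (hw : ∀ x, |w x| ≤ M) (hK : ∀ p, |c p| ≤ K)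
    (hWK : ∀ x, w x = Tminus c w x + c₀) (n : ℕ) (x y : X) :
    BddBelow (Set.range fun p : {q : ℕ → X // q 0 = x ∧ q n = y} =>
      ∑ i ∈ Finset.range n, c (p.1 i, p.1 (i + 1))) := by
  refine ⟨w y - w x - n * c₀, ?_⟩
  rintro r ⟨⟨q, h0, hn⟩, rfl⟩
  have h := w_chain hw hK hWK q n
  rw [h0, hn] at h
  dsimp only
  linarith

lemma chainCost_le_sum (hw : ∀ x, |w x| ≤ M) (hK : ∀ p, |c p| ≤ K)
    (hWK : ∀ x, w x = Tminus c w x + c₀) {n : ℕ} {x y : X}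
    (p : {q : ℕ → X // q 0 = x ∧ q n = y}) :
    chainCost c n x y ≤ ∑ i ∈ Finset.range n, c (p.1 i, p.1 (i + 1)) :=
  ciInf_le (sum_bddBelow hw hK hWK n x y) p

lemma chainCost_lb (hw : ∀ x, |w x| ≤ M) (hK : ∀ p, |c p| ≤ K)
    (hWK : ∀ x, w x = Tminus c w x + c₀) {n : ℕ} (hn : n ≠ 0) (x y : X) :
    w y - w x - n * c₀ ≤ chainCost c n x y := by
  haveI := chain_ne hn x y
  exact le_ciInf fun p => by
    have h := w_chain hw hK hWK p.1 n
    rw [p.2.1, p.2.2] at h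
    linarith

lemma M_nonneg (hw : ∀ x, |w x| ≤ M) : 0 ≤ M :=
  le_trans (abs_nonneg _) (hw (Classical.arbitrary X))

lemma chainCost_zero (x y : X) : chainCost c 0 x y = 0 := by
  by_cases hxy : x = y
  · subst hxy
    haveI : Nonempty {q : ℕ → X // q 0 = x ∧ q 0 = x} := ⟨⟨fun _ => x, rfl, rfl⟩⟩
    simp only [chainCost, Finset.range_zero, Finset.sum_empty]
    exact ciInf_const
  · haveI : IsEmpty {q : ℕ → X // q 0 = x ∧ q 0 = y} :=
      ⟨fun p => hxy (p.2.1.symm.trans p.2.2)⟩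
    rw [chainCost, Real.iInf_of_isEmpty]

lemma A_lb (hw : ∀ x, |w x| ≤ M) (hK : ∀ p, |c p| ≤ K)
    (hWK : ∀ x, w x = Tminus c w x + c₀) (n : ℕ) (x y : X) :
    -(2 * M) ≤ chainCost c n x y + n * c₀ := by
  rcases eq_or_ne n 0 with rfl | hn
  · rw [chainCost_zero]
    have := M_nonneg hw
    push_cast
    linarith
  · have h1 := chainCost_lb hw hK hWK hn x y
    have h2 := (abs_le.1 (hw x)).2
    have h3 := (abs_le.1 (hw y)).1
    linarith

lemma chainCost_one (hw : ∀ x, |w x| ≤ M) (hK : ∀ p, |c p| ≤ K)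
    (hWK : ∀ x, w x = Tminus c w x + c₀) (z x : X) :
    chainCost c 1 z x = c (z, x) := by
  refine le_antisymm ?_ ?_
  · have h := chainCost_le_sum hw hK hWK (n := 1) (x := z) (y := x)
      ⟨fun i => if i = 0 then z else x, by simp, by simp⟩
    simpa using h
  · haveI := chain_ne one_ne_zero z x
    refine le_ciInf fun p => ?_
    have h0 := p.2.1
    have h1 := p.2.2
    simp [Finset.sum_range_one, h0, h1]

end Stmt16Aux


namespace Stmt16Aux2
open Filter Finset Stmt16Aux

variable {X : Type*} [MetricSpace X] [CompactSpace X] [Nonempty X]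
variable {c : X × X → ℝ} {c₀ : ℝ} {w : X → ℝ} {M K : ℝ}

lemma chainCost_concat (hw : ∀ x, |w x| ≤ M) (hK : ∀ p, |c p| ≤ K)
    (hWK : ∀ x, w x = Tminus c w x + c₀) {n m : ℕ} {x y z : X}
    (hn : Nonempty {q : ℕ → X // q 0 = x ∧ q n = y})
    (hm : Nonempty {q : ℕ → X // q 0 = y ∧ q m = z}) :
    chainCost c (n + m) x z ≤ chainCost c n x y + chainCost c m y z := by
  have key : ∀ (p : {q : ℕ → X // q 0 = x ∧ q n = y}) (r : {q : ℕ → X // q 0 = y ∧ q m = z}),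
      chainCost c (n + m) x z ≤ (∑ i ∈ Finset.range n, c (p.1 i, p.1 (i + 1)))
        + ∑ i ∈ Finset.range m, c (r.1 i, r.1 (i + 1)) := by
    rintro ⟨p, hp0, hpn⟩ ⟨r, hr0, hrm⟩
    dsimp only
    set s : ℕ → X := fun i => if i ≤ n then p i else r (i - n) with hs
    have hs0 : s 0 = x := by simp [hs, hp0]
    have hsnm : s (n + m) = z := by
      rcases eq_or_ne m 0 with rfl | hm0
      · have : y = z := hr0.symm.trans hrm
        simp [hs, hpn, this]
      · have h : ¬ (n + m ≤ n) := by omega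
        simp [hs, h, hrm]
    have hsum : (∑ i ∈ Finset.range (n + m), c (s i, s (i + 1)))
        = (∑ i ∈ Finset.range n, c (p i, p (i + 1)))
          + ∑ i ∈ Finset.range m, c (r i, r (i + 1)) := by
      rw [Finset.sum_range_add]
      congr 1
      · refine Finset.sum_congr rfl fun i hi => ?_
        rw [Finset.mem_range] at hi
        have h1 : s i = p i := by simp [hs, show i ≤ n by omega]
        have h2 : s (i + 1) = p (i + 1) := by simp [hs, show i + 1 ≤ n by omega]
        rw [h1, h2]
      · refine Finset.sum_congr rfl fun i hi => ?_
        rw [Finset.mem_range] at hi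
        have h2 : s (n + i + 1) = r (i + 1) := by
          have h : ¬ (n + i + 1 ≤ n) := by omega
          simp [hs, h, show n + i + 1 - n = i + 1 by omega]
        rcases eq_or_ne i 0 with rfl | hi0
        · have h1 : s (n + 0) = r 0 := by simp [hs, hpn, hr0]
          rw [h1, h2]
        · have h1 : s (n + i) = r i := by
            have h : ¬ (n + i ≤ n) := by omega
            simp [hs, h, show n + i - n = i by omega]
          rw [h1, h2]
    calc chainCost c (n + m) x z ≤ _ := chainCost_le_sum hw hK hWK ⟨s, hs0, hsnm⟩
    _ = _ := hsum
  have h1 : ∀ p : {q : ℕ → X // q 0 = x ∧ q n = y}, chainCost c (n + m) x z - chainCost c m y z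
      ≤ ∑ i ∈ Finset.range n, c (p.1 i, p.1 (i + 1)) := by
    intro p
    have h2 : chainCost c (n + m) x z - (∑ i ∈ Finset.range n, c (p.1 i, p.1 (i + 1)))
        ≤ chainCost c m y z := by
      haveI := hm
      refine le_ciInf fun r => ?_
      have := key p r
      linarith
    linarith
  haveI := hn
  have h3 : chainCost c (n + m) x z - chainCost c m y z ≤ chainCost c n x y := le_ciInf h1
  linarith

lemma chainCost_end (hw : ∀ x, |w x| ≤ M) (hK : ∀ p, |c p| ≤ K)
    (hWK : ∀ x, w x = Tminus c w x + c₀) {n : ℕ} (hn : n ≠ 0) {x x' : X} {ε : ℝ}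
    (hε : ∀ p : X, c (p, x') ≤ c (p, x) + ε) (y : X) :
    chainCost c n y x' ≤ chainCost c n y x + ε := by
  obtain ⟨k, rfl⟩ : ∃ k, n = k + 1 := ⟨n - 1, by omega⟩
  have key : ∀ p : {q : ℕ → X // q 0 = y ∧ q (k + 1) = x},
      chainCost c (k + 1) y x' ≤ (∑ i ∈ Finset.range (k + 1), c (p.1 i, p.1 (i + 1))) + ε := by
    rintro ⟨q, h0, hk⟩
    dsimp only
    set s : ℕ → X := fun i => if i = k + 1 then x' else q i with hs
    have hs0 : s 0 = y := by simp [hs, h0]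
    have hsk : s (k + 1) = x' := by simp [hs]
    have h : chainCost c (k + 1) y x' ≤ ∑ i ∈ Finset.range (k + 1), c (s i, s (i + 1)) :=
      chainCost_le_sum hw hK hWK ⟨s, hs0, hsk⟩
    refine h.trans ?_
    rw [Finset.sum_range_succ, Finset.sum_range_succ]
    have heq : ∀ i ∈ Finset.range k, c (s i, s (i + 1)) = c (q i, q (i + 1)) := by
      intro i hi
      rw [Finset.mem_range] at hi
      have h1 : s i = q i := by simp [hs, show ¬ i = k + 1 by omega]
      have h2 : s (i + 1) = q (i + 1) := by simp [hs, show ¬ i + 1 = k + 1 by omega, show ¬ i = k by omega]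
      rw [h1, h2]
    rw [Finset.sum_congr rfl heq]
    have h1 : s k = q k := by simp [hs, show ¬ k = k + 1 by omega]
    have h2 : c (s k, s (k + 1)) ≤ c (q k, q (k + 1)) + ε := by
      rw [h1, hsk, hk]
      exact hε (q k)
    linarith
  haveI := chain_ne (Nat.succ_ne_zero k) y x
  have h2 : chainCost c (k + 1) y x' - ε ≤ chainCost c (k + 1) y x :=
    le_ciInf fun p => by linarith [key p]
  linarith

/-- recurrence property: arbitrarily long almost-free cycles -/
def Rec (c : X × X → ℝ) (c₀ : ℝ) (y : X) : Prop :=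
  ∀ ε > (0:ℝ), ∀ N : ℕ, ∃ n, N ≤ n ∧ chainCost c n y y + n * c₀ < ε

lemma freq_ub (hw : ∀ x, |w x| ≤ M) (hK : ∀ p, |c p| ≤ K)
    (hWK : ∀ x, w x = Tminus c w x + c₀) {y : X} (hy : Rec c c₀ y) (x : X) (N : ℕ) :
    ∃ n, N ≤ n ∧ chainCost c n y x + n * c₀ ≤ K + c₀ + 1 := by
  obtain ⟨m, hm1, hm2⟩ := hy 1 one_pos (max N 1)
  have hN1 := le_max_left N 1
  have hN2 := le_max_right N 1
  have hm0 : m ≠ 0 := by omega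
  refine ⟨m + 1, by omega, ?_⟩
  have h1 : chainCost c (m + 1) y x ≤ chainCost c m y y + chainCost c 1 y x :=
    chainCost_concat hw hK hWK (chain_ne hm0 y y) (chain_ne one_ne_zero y x)
  rw [chainCost_one hw hK hWK] at h1
  have h2 := (abs_le.1 (hK (y, x))).2
  push_cast
  linarith

lemma cobounded_of_freq {u : ℕ → ℝ} {C : ℝ} (h : ∀ N, ∃ n, N ≤ n ∧ u n ≤ C) :
    IsCoboundedUnder (· ≥ ·) atTop u := by
  refine ⟨C, fun b hb => ?_⟩
  rw [eventually_map, eventually_atTop] at hb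
  obtain ⟨N, hN⟩ := hb
  obtain ⟨n, hn1, hn2⟩ := h N
  exact le_trans (hN n hn1) hn2

lemma bounded_of_lb {u : ℕ → ℝ} {b : ℝ} (h : ∀ n, b ≤ u n) :
    IsBoundedUnder (· ≥ ·) atTop u :=
  ⟨b, eventually_map.2 (Eventually.of_forall h)⟩

lemma peierls_lb (hw : ∀ x, |w x| ≤ M) (hK : ∀ p, |c p| ≤ K)
    (hWK : ∀ x, w x = Tminus c w x + c₀) {y : X} (hy : Rec c c₀ y) (x : X) :
    -(2 * M) ≤ peierls c c₀ y x :=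
  le_liminf_of_le (cobounded_of_freq (freq_ub hw hK hWK hy x))
    (Eventually.of_forall fun n => A_lb hw hK hWK n y x)

lemma peierls_ub (hw : ∀ x, |w x| ≤ M) (hK : ∀ p, |c p| ≤ K)
    (hWK : ∀ x, w x = Tminus c w x + c₀) {y : X} (hy : Rec c c₀ y) (x : X) :
    peierls c c₀ y x ≤ K + c₀ + 1 := by
  refine liminf_le_of_frequently_le ?_ (bounded_of_lb fun n => A_lb hw hK hWK n y x)
  rw [frequently_atTop]
  intro N
  obtain ⟨n, h1, h2⟩ := freq_ub hw hK hWK hy x N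
  exact ⟨n, h1, h2⟩

lemma peierls_dom (hw : ∀ x, |w x| ≤ M) (hK : ∀ p, |c p| ≤ K)
    (hWK : ∀ x, w x = Tminus c w x + c₀) {y : X} (hy : Rec c c₀ y) (z x : X) :
    peierls c c₀ y x ≤ peierls c c₀ y z + c (z, x) + c₀ := by
  have main : ∀ ε > (0:ℝ), peierls c c₀ y x ≤ (peierls c c₀ y z + c (z, x) + c₀) + ε := by
    intro ε hε
    have hfr : ∃ᶠ n in atTop, chainCost c n y z + n * c₀ < peierls c c₀ y z + ε :=
      frequently_lt_of_liminf_lt (cobounded_of_freq (freq_ub hw hK hWK hy z))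
        (lt_add_of_pos_right _ hε)
    refine liminf_le_of_frequently_le ?_ (bounded_of_lb fun n => A_lb hw hK hWK n y x)
    rw [frequently_atTop]
    intro N
    rw [frequently_atTop] at hfr
    obtain ⟨n, hn1, hn2⟩ := hfr (max N 1)
    have hN1 := le_max_left N 1
    have hN2 := le_max_right N 1
    have hn0 : n ≠ 0 := by omega
    refine ⟨n + 1, by omega, ?_⟩
    have h1 : chainCost c (n + 1) y x ≤ chainCost c n y z + chainCost c 1 z x :=
      chainCost_concat hw hK hWK (chain_ne hn0 y z) (chain_ne one_ne_zero z x)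
    rw [chainCost_one hw hK hWK] at h1
    push_cast
    linarith
  exact le_of_forall_pos_le_add main

end Stmt16Aux2
namespace Stmt16Aux3
open Filter Finset Stmt16Aux Stmt16Aux2

variable {X : Type*} [MetricSpace X] [CompactSpace X] [Nonempty X]
variable {c : X × X → ℝ} {c₀ : ℝ} {w : X → ℝ} {M K : ℝ}

lemma rec_of_aubry (hw : ∀ x, |w x| ≤ M) (hK : ∀ p, |c p| ≤ K)
    (hWK : ∀ x, w x = Tminus c w x + c₀) {p : X} (hp : Rec c c₀ p) {y : X}
    (hy : y ∈ aubry c c₀) : Rec c c₀ y := by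
  have cob : IsCoboundedUnder (· ≥ ·) atTop (fun n : ℕ => chainCost c n y y + n * c₀) := by
    apply cobounded_of_freq (C := K + c₀ + (K + c₀ + 1))
    intro N
    obtain ⟨m, hm1, hm2⟩ := freq_ub hw hK hWK hp y (max N 1)
    have hN1 := le_max_left N 1
    have hN2 := le_max_right N 1
    have hm0 : m ≠ 0 := by omega
    refine ⟨1 + m, by omega, ?_⟩
    have h1 : chainCost c (1 + m) y y ≤ chainCost c 1 y p + chainCost c m p y :=
      chainCost_concat hw hK hWK (chain_ne one_ne_zero y p) (chain_ne hm0 p y)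
    rw [chainCost_one hw hK hWK] at h1
    have h2 := (abs_le.1 (hK (y, p))).2
    push_cast
    linarith
  intro ε hε N
  have h0 : liminf (fun n : ℕ => chainCost c n y y + n * c₀) atTop < ε := by
    have hyy : peierls c c₀ y y = 0 := hy
    rw [show liminf (fun n : ℕ => chainCost c n y y + n * c₀) atTop = peierls c c₀ y y from rfl,
      hyy]
    exact hε
  have hfr := frequently_lt_of_liminf_lt cob h0
  rw [frequently_atTop] at hfr
  obtain ⟨n, h1, h2⟩ := hfr N
  exact ⟨n, h1, h2⟩

lemma peierls_hard (hc : Continuous c) (hw : ∀ x, |w x| ≤ M) (hK : ∀ p, |c p| ≤ K)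
    (hWK : ∀ x, w x = Tminus c w x + c₀) {y : X} (hy : Rec c c₀ y) (x : X) :
    ∃ z, peierls c c₀ y z + c (z, x) + c₀ ≤ peierls c c₀ y x := by
  set L := peierls c c₀ y x with hL
  have cob : IsCoboundedUnder (· ≥ ·) atTop (fun n : ℕ => chainCost c n y x + n * c₀) :=
    cobounded_of_freq (freq_ub hw hK hWK hy x)
  have hψ : ∀ k : ℕ, ∃ n, k + 2 ≤ n ∧ chainCost c n y x + n * c₀ < L + 1 / (k + 1) := by
    intro k
    have h1 : (0:ℝ) < 1 / ((k:ℝ) + 1) := by positivity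
    have hfr := frequently_lt_of_liminf_lt cob
      (show liminf (fun n : ℕ => chainCost c n y x + n * c₀) atTop < L + 1 / ((k:ℝ) + 1) from
        lt_add_of_pos_right _ h1)
    rw [frequently_atTop] at hfr
    obtain ⟨n, hn1, hn2⟩ := hfr (k + 2)
    exact ⟨n, hn1, hn2⟩
  choose ψ hψ2 hψlt using hψ
  have hch : ∀ k : ℕ, ∃ Q : ℕ → X, Q 0 = y ∧ Q (ψ k) = x ∧
      (∑ i ∈ Finset.range (ψ k), c (Q i, Q (i + 1))) < chainCost c (ψ k) y x + 1 / (k + 1) := by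
    intro k
    haveI := chain_ne (show ψ k ≠ 0 by have := hψ2 k; omega) y x
    have h1 : (0:ℝ) < 1 / ((k:ℝ) + 1) := by positivity
    obtain ⟨⟨Q, h0, hx'⟩, hlt⟩ := exists_lt_of_ciInf_lt
      (show (⨅ p : {q : ℕ → X // q 0 = y ∧ q (ψ k) = x},
          ∑ i ∈ Finset.range (ψ k), c (p.1 i, p.1 (i + 1)))
        < chainCost c (ψ k) y x + 1 / ((k:ℝ) + 1) from lt_add_of_pos_right _ h1)
    exact ⟨Q, h0, hx', hlt⟩
  choose Q hQ0 hQx hQs using hch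
  set z : ℕ → X := fun k => Q k (ψ k - 1) with hz
  have htr : ∀ k : ℕ, chainCost c (ψ k - 1) y (z k) + ((ψ k - 1 : ℕ) : ℝ) * c₀
      < L + 2 / (k + 1) - c (z k, x) - c₀ := by
    intro k
    have hk2 := hψ2 k
    obtain ⟨m, hm⟩ : ∃ m, ψ k = m + 1 := ⟨ψ k - 1, by omega⟩
    have hm' : ψ k - 1 = m := by omega
    have hzk : z k = Q k m := by rw [hz]; simp only; rw [hm']
    have h1 : chainCost c m y (z k) ≤ ∑ i ∈ Finset.range m, c (Q k i, Q k (i + 1)) :=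
      chainCost_le_sum hw hK hWK ⟨Q k, hQ0 k, hzk.symm⟩
    have hQlast : Q k (m + 1) = x := by rw [← hm]; exact hQx k
    have h2 : (∑ i ∈ Finset.range (m + 1), c (Q k i, Q k (i + 1)))
        = (∑ i ∈ Finset.range m, c (Q k i, Q k (i + 1))) + c (z k, x) := by
      rw [Finset.sum_range_succ, hQlast, ← hzk]
    have h3 := hQs k
    rw [hm] at h3
    have h4 := hψlt k
    rw [hm] at h4
    rw [hm']
    push_cast at h4 ⊢
    rw [h2] at h3
    have hdiv : 2 / ((k:ℝ) + 1) = 1 / ((k:ℝ) + 1) + 1 / ((k:ℝ) + 1) := by ring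
    linarith
  obtain ⟨zlim, φ, hφ, hconv⟩ := CompactSpace.tendsto_subseq z
  refine ⟨zlim, ?_⟩
  have main : ∀ ε > (0:ℝ), peierls c c₀ y zlim + c (zlim, x) + c₀ ≤ L + ε := by
    intro ε hε
    obtain ⟨δ, hδ0, hUC⟩ := Metric.uniformContinuous_iff.1
      (CompactSpace.uniformContinuous_of_continuous hc) (ε / 4) (by linarith)
    suffices h : peierls c c₀ y zlim ≤ L - c (zlim, x) - c₀ + ε by linarith
    refine liminf_le_of_frequently_le ?_ (bounded_of_lb fun n => A_lb hw hK hWK n y zlim)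
    rw [frequently_atTop]
    intro N
    obtain ⟨K₁, hK₁⟩ := Metric.tendsto_atTop.1 hconv δ hδ0
    obtain ⟨K₂, hK₂⟩ := exists_nat_gt (8 / ε)
    set k := max (max N K₁) K₂ with hk
    have hkN : N ≤ k := le_trans (le_max_left N K₁) (le_max_left _ K₂)
    have hkK₁ : K₁ ≤ k := le_trans (le_max_right N K₁) (le_max_left _ K₂)
    have hkK₂ : K₂ ≤ k := le_max_right _ K₂
    have hφk : k ≤ φ k := hφ.le_apply
    have hψφ := hψ2 (φ k)
    have hd : dist (z (φ k)) zlim < δ := hK₁ k hkK₁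
    -- numeric bound : 2 / (φ k + 1) ≤ ε / 4
    have h8 : (8:ℝ) / ε < (k:ℝ) + 1 := by
      have : (K₂:ℝ) ≤ (k:ℝ) := by exact_mod_cast hkK₂
      linarith
    have h8' : 8 < ((k:ℝ) + 1) * ε := (div_lt_iff₀ hε).1 h8
    have hquarter : 2 / ((φ k : ℝ) + 1) ≤ ε / 4 := by
      have hle : ((k:ℝ) + 1) ≤ ((φ k : ℝ) + 1) := by
        have : (k:ℝ) ≤ (φ k : ℝ) := by exact_mod_cast hφk
        linarith
      have hpos : (0:ℝ) < (k:ℝ) + 1 := by positivity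
      have h1 : 2 / ((φ k : ℝ) + 1) ≤ 2 / ((k:ℝ) + 1) := by gcongr
      have h2 : 2 / ((k:ℝ) + 1) ≤ ε / 4 := by
        rw [div_le_div_iff₀ hpos (by norm_num)]
        nlinarith
      linarith
    -- endpoint comparison
    have hεmod : ∀ p : X, c (p, zlim) ≤ c (p, z (φ k)) + ε / 4 := by
      intro p
      have hdp : dist ((p, zlim) : X × X) (p, z (φ k)) < δ := by
        rw [Prod.dist_eq]
        simp only [dist_self]
        refine max_lt hδ0 ?_
        rwa [dist_comm]
      have h1 := hUC hdp
      rw [Real.dist_eq] at h1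
      have := (abs_lt.1 h1).2
      linarith
    have hcx : c (zlim, x) ≤ c (z (φ k), x) + ε / 4 := by
      have hdp : dist ((zlim, x) : X × X) (z (φ k), x) < δ := by
        rw [Prod.dist_eq]
        simp only [dist_self]
        refine max_lt ?_ hδ0
        rwa [dist_comm]
      have h1 := hUC hdp
      rw [Real.dist_eq] at h1
      have := (abs_lt.1 h1).2
      linarith
    refine ⟨ψ (φ k) - 1, by omega, ?_⟩
    have h1 : chainCost c (ψ (φ k) - 1) y zlim
        ≤ chainCost c (ψ (φ k) - 1) y (z (φ k)) + ε / 4 :=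
      chainCost_end hw hK hWK (show ψ (φ k) - 1 ≠ 0 by omega) hεmod y
    have h2 := htr (φ k)
    have h3 : 2 / ((φ k : ℝ) + 1) ≤ ε / 4 := hquarter
    linarith
  exact le_of_forall_pos_le_add main

end Stmt16Aux3
namespace Stmt16Aux4
open Filter Finset Stmt16Aux Stmt16Aux2

variable {X : Type*} [MetricSpace X] [CompactSpace X] [Nonempty X]
variable {c : X × X → ℝ} {c₀ : ℝ} {w : X → ℝ} {M K : ℝ}

lemma exists_rec (hc : Continuous c) (hw : ∀ x, |w x| ≤ M) (hK : ∀ p, |c p| ≤ K)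
    (hWK : ∀ x, w x = Tminus c w x + c₀) :
    ∃ p : X, Rec c c₀ p := by
  classical
  -- approximate minimizer step
  have step : ∀ (v : X) (η : ℝ), 0 < η → ∃ u : X, w u + c (u, v) + c₀ < w v + η := by
    intro v η hη
    have h1 : Tminus c w v < Tminus c w v + η := by linarith
    obtain ⟨u, hu⟩ := exists_lt_of_ciInf_lt
      (show (⨅ u : X, (w u + c (u, v))) < Tminus c w v + η from h1)
    have h2 := hWK v
    exact ⟨u, by linarith⟩
  have step' : ∀ (v : X) (k : ℕ), ∃ u : X, w u + c (u, v) + c₀ < w v + (1/2)^(k+1) :=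
    fun v k => step v _ (by positivity)
  choose g hg using step'
  let x : ℕ → X := fun k => Nat.rec (Classical.arbitrary X) (fun k xk => g xk k) k
  have hx : ∀ k, w (x (k+1)) + c (x (k+1), x k) + c₀ < w (x k) + (1/2)^(k+1) :=
    fun k => hg (x k) k
  -- modulus of continuity of w
  have wmod : ∀ (η δ : ℝ), 0 < η → 0 < δ →
      (∀ ⦃a b : X × X⦄, dist a b < δ → dist (c a) (c b) < η) →
      ∀ v v' : X, dist v v' < δ → w v' ≤ w v + η := by
    intro η δ hη hδ hUC v v' hd
    have key : ∀ θ > (0:ℝ), w v' ≤ (w v + η) + θ := by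
      intro θ hθ
      obtain ⟨u, hu⟩ := step v θ hθ
      have h1 := w_step hw hK hWK u v'
      have h2 : dist ((u, v') : X × X) (u, v) < δ := by
        rw [Prod.dist_eq]
        simp only [dist_self]
        refine max_lt hδ ?_
        rwa [dist_comm]
      have h3 := hUC h2
      rw [Real.dist_eq] at h3
      have h4 := (abs_lt.1 h3).2
      linarith
    exact le_of_forall_pos_le_add key
  -- cluster point of the orbit
  obtain ⟨p, φ, hφ, hconv⟩ := CompactSpace.tendsto_subseq x
  refine ⟨p, ?_⟩
  intro ε hε N
  have hη0 : 0 < ε / 6 := by positivity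
  obtain ⟨δ, hδ0, hUC⟩ := Metric.uniformContinuous_iff.1
    (CompactSpace.uniformContinuous_of_continuous hc) (ε / 6) hη0
  obtain ⟨K₁, hK₁⟩ := Metric.tendsto_atTop.1 hconv δ hδ0
  obtain ⟨j, hj⟩ := exists_pow_lt_of_lt_one hη0 (by norm_num : (1/2 : ℝ) < 1)
  set k := max K₁ j with hk
  set l := max (φ k + N + 2) (k + 1) with hl
  have hkl : k < l := lt_of_lt_of_le (Nat.lt_succ_self k) (le_max_right _ _)
  have hlφ : φ k + N + 2 ≤ l := le_max_left _ _
  have hφl : l ≤ φ l := hφ.le_apply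
  set a := φ k with ha
  set b := φ l with hb
  have hab : a + N + 2 ≤ b := le_trans hlφ hφl
  set n := b - a with hn
  have hn2 : 2 ≤ n := by omega
  have hnN : N ≤ n := by omega
  have hban : b = a + n := by omega
  have hda : dist (x a) p < δ := hK₁ k (le_max_left _ _)
  have hdb : dist (x b) p < δ := hK₁ l (le_trans (le_max_left K₁ j) hkl.le)
  have hja : j ≤ a := le_trans (le_max_right K₁ j) hφ.le_apply
  have hpow : ((1:ℝ)/2)^a < ε / 6 :=
    lt_of_le_of_lt (pow_le_pow_of_le_one (by norm_num) (by norm_num) hja) hj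
  -- the chain
  set s : ℕ → X := fun i => if i = 0 then p else if i = n then p else x (b - i) with hs
  have hs0 : s 0 = p := by simp [hs]
  have hsn : s n = p := by simp [hs, show n ≠ 0 by omega]
  set t : ℕ → ℝ := fun i => c (x (b - i), x (b - i - 1)) with ht
  obtain ⟨m, hm⟩ : ∃ m, n = m + 2 := ⟨n - 2, by omega⟩
  -- three-part decomposition of both sums
  have e1 : (∑ i ∈ Finset.range n, c (s i, s (i + 1)))
      = (∑ i ∈ Finset.range m, c (s (i + 1), s (i + 1 + 1))) + c (s 0, s (0 + 1))
        + c (s (m + 1), s (m + 1 + 1)) := by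
    rw [hm, Finset.sum_range_succ, Finset.sum_range_succ']
  have e2 : (∑ i ∈ Finset.range n, t i)
      = (∑ i ∈ Finset.range m, t (i + 1)) + t 0 + t (m + 1) := by
    rw [hm, Finset.sum_range_succ, Finset.sum_range_succ']
  -- middle terms agree
  have hmid : ∀ i ∈ Finset.range m, c (s (i + 1), s (i + 1 + 1)) = t (i + 1) := by
    intro i hi
    rw [Finset.mem_range] at hi
    have h1 : s (i + 1) = x (b - (i + 1)) := by
      simp [hs, show i + 1 ≠ 0 by omega, show i + 1 ≠ n by omega]
    have h2 : s (i + 1 + 1) = x (b - (i + 1 + 1)) := by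
      simp [hs, show i + 1 + 1 ≠ 0 by omega, show i + 1 + 1 ≠ n by omega]
    rw [h1, h2, ht]
    simp only
    rw [show b - (i + 1 + 1) = b - (i + 1) - 1 by omega]
  -- first term
  have hfirst : c (s 0, s (0 + 1)) ≤ t 0 + ε / 6 := by
    have h1 : s (0 + 1) = x (b - 1) := by
      simp [hs, show (1:ℕ) ≠ 0 by omega, show 1 ≠ n by omega]
    have hdp : dist ((p, x (b - 1)) : X × X) (x b, x (b - 1)) < δ := by
      rw [Prod.dist_eq]
      simp only [dist_self]
      refine max_lt ?_ hδ0
      rwa [dist_comm]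
    have h2 := hUC hdp
    rw [Real.dist_eq] at h2
    have h3 := (abs_lt.1 h2).2
    rw [hs0, h1, ht]
    simp only
    rw [show b - 0 = b by omega]
    linarith
  -- last term
  have hlast : c (s (m + 1), s (m + 1 + 1)) ≤ t (m + 1) + ε / 6 := by
    have h1 : s (m + 1) = x (a + 1) := by
      have : s (m + 1) = x (b - (m + 1)) := by
        simp [hs, show m + 1 ≠ 0 by omega, show m + 1 ≠ n by omega]
      rw [this, show b - (m + 1) = a + 1 by omega]
    have h2 : s (m + 1 + 1) = p := by
      rw [show m + 1 + 1 = n by omega, hsn]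
    have hdp : dist ((x (a + 1), p) : X × X) (x (a + 1), x a) < δ := by
      rw [Prod.dist_eq]
      simp only [dist_self]
      refine max_lt hδ0 ?_
      rwa [dist_comm]
    have h3 := hUC hdp
    rw [Real.dist_eq] at h3
    have h4 := (abs_lt.1 h3).2
    rw [h1, h2, ht]
    simp only
    rw [show b - (m + 1) - 1 = a by omega, show b - (m + 1) = a + 1 by omega]
    linarith
  -- sum of s-chain costs vs t-sum
  have hsum1 : (∑ i ∈ Finset.range n, c (s i, s (i + 1)))
      ≤ (∑ i ∈ Finset.range n, t i) + 2 * (ε / 6) := by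
    rw [e1, e2, Finset.sum_congr rfl hmid]
    linarith
  -- t-sum telescoping bound
  have htb : ∀ i ∈ Finset.range n,
      t i ≤ (w (x (b - i - 1)) - w (x (b - i)) - c₀) + (1/2)^(b - i) := by
    intro i hi
    rw [Finset.mem_range] at hi
    have hbi : b - i - 1 + 1 = b - i := by omega
    have h1 := hx (b - i - 1)
    rw [hbi] at h1
    rw [ht]
    simp only
    linarith
  have hsum2 : (∑ i ∈ Finset.range n, t i)
      ≤ (∑ i ∈ Finset.range n, (w (x (b - i - 1)) - w (x (b - i)))) - n * c₀
        + ∑ i ∈ Finset.range n, ((1:ℝ)/2)^(b - i) := by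
    have := Finset.sum_le_sum htb
    calc (∑ i ∈ Finset.range n, t i)
        ≤ ∑ i ∈ Finset.range n, ((w (x (b - i - 1)) - w (x (b - i)) - c₀) + (1/2)^(b - i)) :=
          Finset.sum_le_sum htb
      _ = _ := by
          rw [Finset.sum_add_distrib, Finset.sum_sub_distrib, Finset.sum_const, Finset.card_range]
          push_cast
          ring
  -- telescope
  have htel : (∑ i ∈ Finset.range n, (w (x (b - i - 1)) - w (x (b - i))))
      = w (x a) - w (x b) := by
    have heq : ∀ i ∈ Finset.range n,
        w (x (b - i - 1)) - w (x (b - i))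
          = (fun i => w (x (b - i))) (i + 1) - (fun i => w (x (b - i))) i := by
      intro i hi
      simp only
      rw [show b - (i + 1) = b - i - 1 by omega]
    rw [Finset.sum_congr rfl heq, Finset.sum_range_sub (fun i => w (x (b - i)))]
    rw [show b - n = a by omega, show b - 0 = b by omega]
  -- geometric sum
  have hgeo : (∑ i ∈ Finset.range n, ((1:ℝ)/2)^(b - i)) ≤ ((1:ℝ)/2)^a := by
    have hrefl : (∑ i ∈ Finset.range n, ((1:ℝ)/2)^(b - i))
        = ∑ i ∈ Finset.range n, ((1:ℝ)/2)^(a + 1 + i) := by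
      rw [← Finset.sum_range_reflect]
      refine Finset.sum_congr rfl fun i hi => ?_
      rw [Finset.mem_range] at hi
      rw [show b - (n - 1 - i) = a + 1 + i by omega]
    rw [hrefl]
    have hfac : (∑ i ∈ Finset.range n, ((1:ℝ)/2)^(a + 1 + i))
        = ((1:ℝ)/2)^(a + 1) * ∑ i ∈ Finset.range n, ((1:ℝ)/2)^i := by
      rw [Finset.mul_sum]
      exact Finset.sum_congr rfl fun i _ => by rw [pow_add]
    rw [hfac]
    have hgs : (∑ i ∈ Finset.range n, ((1:ℝ)/2)^i) ≤ 2 := by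
      rw [geom_sum_eq (by norm_num : ((1:ℝ)/2) ≠ 1)]
      have h0 : (0:ℝ) ≤ ((1:ℝ)/2)^n := by positivity
      have : (((1:ℝ)/2)^n - 1) / ((1:ℝ)/2 - 1) = 2 - 2 * ((1:ℝ)/2)^n := by
        rw [div_eq_iff (by norm_num : ((1:ℝ)/2 - 1) ≠ 0)]
        ring
      rw [this]
      linarith
    have hp : (0:ℝ) < ((1:ℝ)/2)^(a + 1) := by positivity
    calc ((1:ℝ)/2)^(a + 1) * ∑ i ∈ Finset.range n, ((1:ℝ)/2)^i
        ≤ ((1:ℝ)/2)^(a + 1) * 2 := by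
          exact mul_le_mul_of_nonneg_left hgs (le_of_lt hp)
      _ = ((1:ℝ)/2)^a := by rw [pow_succ]; ring
  -- endpoints
  have hwa : w (x a) ≤ w p + ε / 6 := wmod _ _ hη0 hδ0 hUC p (x a) (by rwa [dist_comm])
  have hwb : w p ≤ w (x b) + ε / 6 := wmod _ _ hη0 hδ0 hUC (x b) p hdb
  -- conclusion
  refine ⟨n, hnN, ?_⟩
  have hcc : chainCost c n p p ≤ ∑ i ∈ Finset.range n, c (s i, s (i + 1)) :=
    chainCost_le_sum hw hK hWK ⟨s, hs0, hsn⟩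
  have : chainCost c n p p + n * c₀ ≤ 5 * (ε / 6) := by
    rw [htel] at hsum2
    linarith
  linarith

end Stmt16Aux4
open Stmt16Aux Stmt16Aux2 Stmt16Aux3 Stmt16Aux4 in
theorem stmt16 {X : Type*} [MetricSpace X] [CompactSpace X] [Nonempty X]
    (c : X × X → ℝ) (hc : Continuous c) (c₀ : ℝ)
    (hcrit : ∃ w : X → ℝ, (∃ M, ∀ x, |w x| ≤ M) ∧ ∀ x, w x = Tminus c w x + c₀)
    (hA : (aubry c c₀).Nonempty)
    (f : X → ℝ)
    (hf : ∀ x ∈ aubry c c₀, ∀ y ∈ aubry c c₀, f y - f x ≤ peierls c c₀ x y) :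
    letI u : X → ℝ := fun x => ⨅ y : aubry c c₀, (f y.1 + peierls c c₀ y.1 x)
    (∀ x : X, u x = Tminus c u x + c₀) ∧ ∀ x ∈ aubry c c₀, u x = f x := by
  classical
  obtain ⟨w, ⟨M, hw⟩, hWK⟩ := hcrit
  obtain ⟨z₀, -, hz₀⟩ := isCompact_univ.exists_isMaxOn Set.univ_nonempty hc.abs.continuousOn
  set K := |c z₀| with hKdef
  have hK : ∀ p : X × X, |c p| ≤ K := fun p => hz₀ (Set.mem_univ p)
  obtain ⟨p, hp⟩ := exists_rec hc hw hK hWK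
  have hrec : ∀ y ∈ aubry c c₀, Rec c c₀ y := fun y hy =>
    rec_of_aubry hw hK hWK hp hy
  obtain ⟨x₀, hx₀⟩ := hA
  haveI : Nonempty ↥(aubry c c₀) := ⟨⟨x₀, hx₀⟩⟩
  have hflb : ∀ y : ↥(aubry c c₀), f x₀ - (K + c₀ + 1) ≤ f y.1 := by
    rintro ⟨y, hy⟩
    have h1 := hf y hy x₀ hx₀
    have h2 := peierls_ub hw hK hWK (hrec y hy) x₀
    simp only
    linarith
  have hBdd : ∀ x : X,
      BddBelow (Set.range fun y : ↥(aubry c c₀) => f y.1 + peierls c c₀ y.1 x) := by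
    intro x
    refine ⟨f x₀ - (K + c₀ + 1) - 2 * M, ?_⟩
    rintro r ⟨⟨y, hy⟩, rfl⟩
    have h1 := peierls_lb hw hK hWK (hrec y hy) x
    have h2 := hflb ⟨y, hy⟩
    simp only at h2 ⊢
    linarith
  have hulb : ∀ x : X, f x₀ - (K + c₀ + 1) - 2 * M
      ≤ ⨅ y : ↥(aubry c c₀), (f y.1 + peierls c c₀ y.1 x) := by
    intro x
    refine le_ciInf ?_
    rintro ⟨y, hy⟩
    have h1 := peierls_lb hw hK hWK (hrec y hy) x
    have h2 := hflb ⟨y, hy⟩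
    simp only at h2 ⊢
    linarith
  constructor
  · intro x
    have hTBdd : BddBelow (Set.range fun z =>
        (⨅ y : ↥(aubry c c₀), (f y.1 + peierls c c₀ y.1 z)) + c (z, x)) := by
      refine ⟨(f x₀ - (K + c₀ + 1) - 2 * M) + -K, ?_⟩
      rintro r ⟨z, rfl⟩
      have h1 := hulb z
      have h2 := (abs_le.1 (hK (z, x))).1
      simp only
      linarith
    have hle : (⨅ y : ↥(aubry c c₀), (f y.1 + peierls c c₀ y.1 x))
        ≤ Tminus c (fun x' => ⨅ y : ↥(aubry c c₀), (f y.1 + peierls c c₀ y.1 x')) x + c₀ := by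
      have h3 : ∀ z : X, (⨅ y : ↥(aubry c c₀), (f y.1 + peierls c c₀ y.1 x)) - c₀
          ≤ (⨅ y : ↥(aubry c c₀), (f y.1 + peierls c c₀ y.1 z)) + c (z, x) := by
        intro z
        have key : ∀ y : ↥(aubry c c₀),
            (⨅ y' : ↥(aubry c c₀), (f y'.1 + peierls c c₀ y'.1 x)) - c₀ - c (z, x)
              ≤ f y.1 + peierls c c₀ y.1 z := by
          rintro ⟨y, hy⟩
          have h1 : (⨅ y' : ↥(aubry c c₀), (f y'.1 + peierls c c₀ y'.1 x))
              ≤ f y + peierls c c₀ y x := ciInf_le (hBdd x) ⟨y, hy⟩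
          have h2 := peierls_dom hw hK hWK (hrec y hy) z x
          simp only
          linarith
        have h4 := le_ciInf key
        linarith
      have h5 : (⨅ y : ↥(aubry c c₀), (f y.1 + peierls c c₀ y.1 x)) - c₀
          ≤ Tminus c (fun x' => ⨅ y : ↥(aubry c c₀), (f y.1 + peierls c c₀ y.1 x')) x :=
        le_ciInf h3
      linarith
    have hge : Tminus c (fun x' => ⨅ y : ↥(aubry c c₀), (f y.1 + peierls c c₀ y.1 x')) x + c₀
        ≤ ⨅ y : ↥(aubry c c₀), (f y.1 + peierls c c₀ y.1 x) := by
      have key : ∀ y : ↥(aubry c c₀),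
          Tminus c (fun x' => ⨅ y : ↥(aubry c c₀), (f y.1 + peierls c c₀ y.1 x')) x + c₀
            ≤ f y.1 + peierls c c₀ y.1 x := by
        rintro ⟨y, hy⟩
        obtain ⟨z, hz⟩ := peierls_hard hc hw hK hWK (hrec y hy) x
        have h1 : Tminus c (fun x' => ⨅ y : ↥(aubry c c₀), (f y.1 + peierls c c₀ y.1 x')) x
            ≤ (⨅ y : ↥(aubry c c₀), (f y.1 + peierls c c₀ y.1 z)) + c (z, x) :=
          ciInf_le hTBdd z
        have h2 : (⨅ y' : ↥(aubry c c₀), (f y'.1 + peierls c c₀ y'.1 z))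
            ≤ f y + peierls c c₀ y z := ciInf_le (hBdd z) ⟨y, hy⟩
        simp only
        linarith
      exact le_ciInf key
    exact le_antisymm hle hge
  · intro x hx
    refine le_antisymm ?_ ?_
    · have h1 : (⨅ y : ↥(aubry c c₀), (f y.1 + peierls c c₀ y.1 x))
          ≤ f x + peierls c c₀ x x := ciInf_le (hBdd x) ⟨x, hx⟩
      have h2 : peierls c c₀ x x = 0 := hx
      rw [h2] at h1
      linarith
    · refine le_ciInf ?_
      rintro ⟨y, hy⟩
      have h1 := hf y hy x hx
      simp only
      linarith
end

section
/- Discounted comparison principle: fix λ ∈ (0,1) and let u_λ be the unique fixed point of T⁻_λ. If v₁, v₂ are bounded functions with v₁ ≤ T⁻_λ v₁ and v₂ ≥ T⁻_λ v₂ pointwise, then v₁ ≤ u_λ ≤ v₂. Consequently, if u is a continuous weak KAM solution (u = T⁻u + c₀) and ū = u + K ≥ 0, u̲ = u − K ≤ 0 for some constant K, then u̲ − c₀/(1−λ) ≤ u_λ ≤ ū − c₀/(1−λ), so the family (u_λ + c₀/(1−λ))_{λ ∈ (0,1)} is uniformly bounded. -/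
/-- The discounted Lax–Oleinik operator. -/
noncomputable def Tlam {X : Type*} (c : X × X → ℝ) (lam : ℝ) (f : X → ℝ) : X → ℝ :=
  fun x => ⨅ y, (lam * f y + c (y, x))

private lemma iInf_le_iInf_add {X : Type*} [Nonempty X] {F G : X → ℝ}
    (hF : BddBelow (Set.range F)) (k : ℝ) (h : ∀ y, F y ≤ G y + k) :
    (⨅ y, F y) ≤ (⨅ y, G y) + k := by
  rw [← sub_le_iff_le_add]
  exact le_ciInf fun y => sub_le_iff_le_add.2 ((ciInf_le hF y).trans (h y))

theorem stmt18 {X : Type*} [MetricSpace X] [CompactSpace X] [Nonempty X]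
    (c : X × X → ℝ) (hc : Continuous c) (c₀ : ℝ)
    (lam : ℝ) (h0 : 0 < lam) (h1 : lam < 1)
    (ulam : X → ℝ) (hulam_bdd : ∃ M, ∀ x, |ulam x| ≤ M)
    (hulam : ∀ x, ulam x = Tlam c lam ulam x) :
    (∀ v₁ v₂ : X → ℝ, (∃ M, ∀ x, |v₁ x| ≤ M) → (∃ M, ∀ x, |v₂ x| ≤ M) →
        (∀ x, v₁ x ≤ Tlam c lam v₁ x) → (∀ x, Tlam c lam v₂ x ≤ v₂ x) →
        ∀ x, v₁ x ≤ ulam x ∧ ulam x ≤ v₂ x) ∧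
    (∀ u : X → ℝ, Continuous u → (∀ x, u x = Tminus c u x + c₀) →
        ∀ K : ℝ, (∀ x, 0 ≤ u x + K) → (∀ x, u x - K ≤ 0) →
        ∀ x, u x - K - c₀ / (1 - lam) ≤ ulam x ∧
          ulam x ≤ u x + K - c₀ / (1 - lam)) := by
  -- bound on c
  obtain ⟨z₀, -, hz₀⟩ := isCompact_univ.exists_isMaxOn Set.univ_nonempty (hc.abs).continuousOn
  set C : ℝ := |c z₀| with hCdef
  have hC : ∀ z, |c z| ≤ C := fun z => hz₀ (Set.mem_univ z)
  obtain ⟨Mu, hMu⟩ := hulam_bdd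
  -- bdd below lemma for ranges appearing in Tlam
  have bddT : ∀ (f : X → ℝ) (M : ℝ), (∀ y, |f y| ≤ M) → ∀ x : X,
      BddBelow (Set.range fun y => lam * f y + c (y, x)) := by
    intro f M hM x
    refine ⟨-(lam * M + C), ?_⟩
    rintro r ⟨y, rfl⟩
    dsimp only
    have h1 := (abs_le.1 (hM y)).1
    have h2 := (abs_le.1 (hC (y, x))).1
    nlinarith
  -- key contraction estimate: Tlam f x ≤ Tlam g x + lam * D when f - g ≤ D
  have key : ∀ (f g : X → ℝ) (Mf : ℝ), (∀ y, |f y| ≤ Mf) → ∀ (D : ℝ),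
      (∀ y, f y - g y ≤ D) → ∀ x, Tlam c lam f x ≤ Tlam c lam g x + lam * D := by
    intro f g Mf hMf D hD x
    exact iInf_le_iInf_add (bddT f Mf hMf x) (lam * D) fun y => by nlinarith [hD y]
  -- comparison for subsolutions: v ≤ Tlam v and w = Tlam w (pointwise), both bdd ⇒ v ≤ w
  have comp : ∀ (v w : X → ℝ) (Mv Mw : ℝ), (∀ y, |v y| ≤ Mv) → (∀ y, |w y| ≤ Mw) →
      (∀ x, v x ≤ Tlam c lam v x) → (∀ x, Tlam c lam w x ≤ w x) →
      ∀ x, v x ≤ w x := by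
    intro v w Mv Mw hMv hMw hv hw x
    set D : ℝ := sSup (Set.range fun y => v y - w y) with hDdef
    have hne : (Set.range fun y => v y - w y).Nonempty := Set.range_nonempty _
    have hbdd : BddAbove (Set.range fun y => v y - w y) := by
      refine ⟨Mv + Mw, ?_⟩
      rintro r ⟨y, rfl⟩
      dsimp only
      have := (abs_le.1 (hMv y)).2
      have := (abs_le.1 (hMw y)).1
      linarith
    have hleD : ∀ y, v y - w y ≤ D := fun y => le_csSup hbdd ⟨y, rfl⟩
    have hDle : D ≤ lam * D := by
      apply csSup_le hne
      rintro r ⟨y, rfl⟩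
      calc v y - w y ≤ Tlam c lam v y - Tlam c lam w y := by
            have := hv y; have := hw y; linarith
        _ ≤ lam * D := by
            have := key v w Mv hMv D hleD y; linarith
    have hD0 : D ≤ 0 := by nlinarith
    linarith [hleD x]
  constructor
  · intro v₁ v₂ ⟨M1, hM1⟩ ⟨M2, hM2⟩ hv1 hv2 x
    have hTu : ∀ x, Tlam c lam ulam x ≤ ulam x := fun x => (hulam x).ge
    have hTu' : ∀ x, ulam x ≤ Tlam c lam ulam x := fun x => (hulam x).le
    exact ⟨comp v₁ ulam M1 Mu hM1 hMu hv1 hTu x,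
      comp ulam v₂ Mu M2 hMu hM2 hTu' hv2 x⟩
  · intro u hu hweak K hK1 hK2 x
    set a : ℝ := c₀ / (1 - lam) with hadef
    have hlam1 : (1 : ℝ) - lam ≠ 0 := by linarith
    have ha : (1 - lam) * a = c₀ := by rw [hadef]; field_simp
    -- bound for u
    obtain ⟨x₀, -, hx₀⟩ := isCompact_univ.exists_isMaxOn Set.univ_nonempty (hu.abs).continuousOn
    set Mu' : ℝ := |u x₀| with hMudef
    have hMu' : ∀ y, |u y| ≤ Mu' := fun y => hx₀ (Set.mem_univ y)
    have bddu : ∀ x : X, BddBelow (Set.range fun y => u y + c (y, x)) := by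
      intro x
      refine ⟨-(Mu' + C), ?_⟩
      rintro r ⟨y, rfl⟩
      dsimp only
      have h1 := (abs_le.1 (hMu' y)).1
      have h2 := (abs_le.1 (hC (y, x))).1
      linarith
    have hTminus_le : ∀ x y, u x - c₀ ≤ u y + c (y, x) := by
      intro x y
      have h1 : u x - c₀ = Tminus c u x := by linarith [hweak x]
      rw [h1]
      exact ciInf_le (bddu x) y
    -- v₁ := u - K - a is a subsolution
    have hv1 : ∀ x, u x - K - a ≤ Tlam c lam (fun y => u y - K - a) x := by
      intro x
      apply le_ciInf
      intro y
      dsimp only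
      have h1 := hTminus_le x y
      have h2 : u y ≤ K := by linarith [hK2 y]
      have h3 : (1 - lam) * u y ≤ (1 - lam) * K :=
        mul_le_mul_of_nonneg_left h2 (by linarith)
      nlinarith [ha]
    -- v₂ := u + K - a is a supersolution
    have hv2 : ∀ x, Tlam c lam (fun y => u y + K - a) x ≤ u x + K - a := by
      intro x
      have hb : BddBelow (Set.range fun y => lam * ((fun y => u y + K - a) y) + c (y, x)) := by
        apply bddT _ (Mu' + |K| + |a|)
        intro y
        calc |u y + K - a| ≤ |u y| + |K| + |a| := by
              have := abs_sub (u y + K) a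
              have := abs_add_le (u y) K
              calc |u y + K - a| ≤ |u y + K| + |a| := abs_sub _ _
                _ ≤ |u y| + |K| + |a| := by linarith [abs_add_le (u y) K]
          _ ≤ Mu' + |K| + |a| := by linarith [hMu' y]
      have step : Tlam c lam (fun y => u y + K - a) x ≤ (⨅ y, (u y + c (y, x))) + (K - lam * a) := by
        apply iInf_le_iInf_add hb
        intro y
        dsimp only
        have h2 : -K ≤ u y := by linarith [hK1 y]
        have h3 : (1 - lam) * (-K) ≤ (1 - lam) * u y :=
          mul_le_mul_of_nonneg_left h2 (by linarith)
        nlinarith [ha]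
      have hTm : (⨅ y, (u y + c (y, x))) = u x - c₀ := by
        have h1 : u x = Tminus c u x + c₀ := hweak x
        simp only [Tminus] at h1
        linarith
      rw [hTm] at step
      nlinarith
    have hbv1 : ∃ M, ∀ y, |u y - K - a| ≤ M := by
      refine ⟨Mu' + |K| + |a|, fun y => ?_⟩
      calc |u y - K - a| ≤ |u y - K| + |a| := abs_sub _ _
        _ ≤ |u y| + |K| + |a| := by linarith [abs_sub (u y) K]
        _ ≤ Mu' + |K| + |a| := by linarith [hMu' y]
    have hbv2 : ∃ M, ∀ y, |u y + K - a| ≤ M := by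
      refine ⟨Mu' + |K| + |a|, fun y => ?_⟩
      calc |u y + K - a| ≤ |u y + K| + |a| := abs_sub _ _
        _ ≤ |u y| + |K| + |a| := by linarith [abs_add_le (u y) K]
        _ ≤ Mu' + |K| + |a| := by linarith [hMu' y]
    obtain ⟨M1, hM1⟩ := hbv1
    obtain ⟨M2, hM2⟩ := hbv2
    have hTu : ∀ x, Tlam c lam ulam x ≤ ulam x := fun x => (hulam x).ge
    have hTu' : ∀ x, ulam x ≤ Tlam c lam ulam x := fun x => (hulam x).le
    exact ⟨comp (fun y => u y - K - a) ulam M1 Mu hM1 hMu hv1 hTu x,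
      comp ulam (fun y => u y + K - a) Mu M2 hMu hM2 hTu' hv2 x⟩
end

section
/- Aubry–Le Daeron fundamental crossing lemma: let S : ℝ² → ℝ be C² with ∂²S/∂x∂y (p, q) < 0 for all (p,q). If (x − x')(y − y') < 0, then S(x, y) + S(x', y') > S(x, y') + S(x', y). -/
theorem stmt19_key (S : ℝ → ℝ → ℝ)
    (hS : ContDiff ℝ 2 (Function.uncurry S))
    (hmix : ∀ p q : ℝ, deriv (fun x => deriv (fun y => S x y) q) p < 0)
    (x x' y y' : ℝ) (hx : x < x') (hy : y' < y) :
    S x y' + S x' y < S x y + S x' y' := by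
  have hdiff : Differentiable ℝ (Function.uncurry S) := hS.differentiable (by norm_num)
  have hdp : ∀ p, Differentiable ℝ (fun q => S p q) := by
    intro p
    have h : (fun q => S p q) = Function.uncurry S ∘ (fun q => (p, q)) := rfl
    rw [h]
    exact hdiff.comp ((differentiable_const _).prodMk differentiable_id)
  have hanti : ∀ q, StrictAnti (fun p => deriv (fun y => S p y) q) := by
    intro q
    exact strictAnti_of_deriv_neg (fun p => hmix p q)
  have hg : StrictMono (fun q => S x q - S x' q) := by
    apply strictMono_of_deriv_pos
    intro q
    rw [deriv_fun_sub (hdp x q) (hdp x' q)]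
    have := hanti q hx
    simp only at this
    linarith
  have := hg hy
  simp only at this
  linarith

/-- Aubry–Le Daeron fundamental crossing lemma. -/
theorem stmt19 (S : ℝ → ℝ → ℝ)
    (hS : ContDiff ℝ 2 (Function.uncurry S))
    (hmix : ∀ p q : ℝ, deriv (fun x => deriv (fun y => S x y) q) p < 0)
    (x x' y y' : ℝ) (hcross : (x - x') * (y - y') < 0) :
    S x y' + S x' y < S x y + S x' y' := by
  rcases mul_neg_iff.mp hcross with ⟨h1, h2⟩ | ⟨h1, h2⟩
  · have := stmt19_key S hS hmix x' x y' y (by linarith) (by linarith)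
    linarith
  · have := stmt19_key S hS hmix x x' y y' (by linarith) (by linarith)
    linarith
end
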